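/- arXiv:2007.14422 — 6 statements merged into one kernel-verified Lean document; each statement's English description precedes it below -/
import Mathlib

section
/- The dot action of Sp₄(𝔽₂) is transitive on ordered syzygous triples and on ordered azygous triples of E: if (x,y,z) and (x',y',z') are triples of pairwise distinct elements of E which are both syzygous, or both azygous, then there exists M ∈ Sp₄(𝔽₂) with x ⊙ M = x', y ⊙ M = y' and z ⊙ M = z'. -/
open Matrix BigOperators

abbrev F2 : Type := ZMod 2
abbrev V4 : Type := Fin 4 → F2
abbrev M4 : Type := Matrix (Fin 4) (Fin 4) F2

/-- The standard symplectic matrix `J = [[0, I₂], [−I₂, 0]]` over `𝔽₂`. -/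
def J4 : M4 := !![0, 0, 1, 0; 0, 0, 0, 1; -1, 0, 0, 0; 0, -1, 0, 0]

/-- `M ∈ Sp₄(𝔽₂)`, i.e. `ᵀM·J·M = J`. -/
def IsSp4 (M : M4) : Prop := Mᵀ * J4 * M = J4

/-- The quadratic form `q₂(m) = m₁m₃ + m₂m₄`. -/
def q2 (m : V4) : F2 := m 0 * m 2 + m 1 * m 3

/-- The dot action `m ⊙ M := m·M − ((ᵀC·A)₀, (ᵀD·B)₀)` for `M = [[A,B],[C,D]]`:
the correction vector has `j`-th entry `M 2 j * M 0 j + M 3 j * M 1 j`, which is the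
`j`-th diagonal entry of `ᵀC·A` for `j = 0,1` and of `ᵀD·B` for `j = 2,3`. -/
def dotAct (m : V4) (M : M4) : V4 :=
  fun j => Matrix.vecMul m M j - (M 2 j * M 0 j + M 3 j * M 1 j)

/-- The set `E` of even theta characteristics: the isotropic vectors of `q₂`. -/
def Echar : Finset V4 := Finset.univ.filter (fun m => q2 m = 0)

/-- `e(x,y,z) := q₂(x)+q₂(y)+q₂(z)+q₂(x+y+z)`. -/
def eSyz (x y z : V4) : F2 := q2 x + q2 y + q2 z + q2 (x + y + z)

/-- A syzygous triple: three pairwise distinct elements of `E` with `e(x,y,z) = 0`. -/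
def IsSyzTriple (T : Finset V4) : Prop :=
  T ⊆ Echar ∧ T.card = 3 ∧
    ∀ x ∈ T, ∀ y ∈ T, ∀ z ∈ T, x ≠ y → x ≠ z → y ≠ z → eSyz x y z = 0

/-- An azygous triple: three pairwise distinct elements of `E` with `e(x,y,z) ≠ 0`. -/
def IsAzyTriple (T : Finset V4) : Prop :=
  T ⊆ Echar ∧ T.card = 3 ∧
    ∀ x ∈ T, ∀ y ∈ T, ∀ z ∈ T, x ≠ y → x ≠ z → y ≠ z → eSyz x y z ≠ 0

/-- A Göpel quadruple: four distinct elements of `E`, all of whose triples are syzygous. -/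
def IsGopel (Q : Finset V4) : Prop :=
  Q ⊆ Echar ∧ Q.card = 4 ∧
    ∀ x ∈ Q, ∀ y ∈ Q, ∀ z ∈ Q, x ≠ y → x ≠ z → y ≠ z → eSyz x y z = 0

/-- An azygous quadruple: four distinct elements of `E`, all of whose triples are azygous. -/
def IsAzyQuad (Q : Finset V4) : Prop :=
  Q ⊆ Echar ∧ Q.card = 4 ∧
    ∀ x ∈ Q, ∀ y ∈ Q, ∀ z ∈ Q, x ≠ y → x ≠ z → y ≠ z → eSyz x y z ≠ 0

def v0000 : V4 := ![0,0,0,0]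
def v0001 : V4 := ![0,0,0,1]
def v0010 : V4 := ![0,0,1,0]
def v0011 : V4 := ![0,0,1,1]
def v0100 : V4 := ![0,1,0,0]
def v0110 : V4 := ![0,1,1,0]
def v1000 : V4 := ![1,0,0,0]
def v1001 : V4 := ![1,0,0,1]
def v1100 : V4 := ![1,1,0,0]
def v1111 : V4 := ![1,1,1,1]

/-- A `k`-point of the Satake compactification `A₂(2)ˢ ⊆ ℙ⁹`: a tuple `(x_m)_{m ∈ E}`
satisfying the five linear equations and the quartic equation. -/
def IsA22Point {k : Type*} [Field k] (x : V4 → k) : Prop :=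
  x v1000 - x v1100 + x v1111 - x v1001 = 0 ∧
  x v0000 - x v0001 - x v0110 - x v1100 = 0 ∧
  x v0110 - x v0010 - x v1111 + x v0011 = 0 ∧
  x v0100 - x v0000 + x v1001 + x v0011 = 0 ∧
  x v0100 - x v1000 + x v0001 - x v0010 = 0 ∧
  (∑ m ∈ Echar, (x m) ^ 2) ^ 2 - 4 * ∑ m ∈ Echar, (x m) ^ 4 = 0

lemma Echar_nonempty : Echar.Nonempty := ⟨v0000, by decide⟩

/-- An absolute value on a field `K`. -/
def IsAbsValue {K : Type*} [Field K] (v : K → ℝ) : Prop :=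
  (∀ a, 0 ≤ v a) ∧ (∀ a, v a = 0 ↔ a = 0) ∧
    (∀ a b, v (a * b) = v a * v b) ∧ (∀ a b, v (a + b) ≤ v a + v b)

/-- A nonarchimedean absolute value on a field `K`. -/
def IsNonarchAbsValue {K : Type*} [Field K] (v : K → ℝ) : Prop :=
  IsAbsValue v ∧ ∀ a b, v (a + b) ≤ max (v a) (v b)

/-- An absolute value induced by a field embedding into `ℂ`. -/
def IsComplexEmbAbsValue {K : Type*} [Field K] (v : K → ℝ) : Prop :=
  ∃ σ : K →+* ℂ, ∀ a, v a = ‖σ a‖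


/- ### Auxiliary material for the proof of transitivity -/

instance : DecidablePred IsSp4 := fun M => inferInstanceAs (Decidable (Mᵀ * J4 * M = J4))

lemma sq2 : ∀ a : F2, a * a = a := by decide

lemma two2 : (2 : F2) = 0 := by decide

set_option maxHeartbeats 1000000 in
/-- The dot action is compatible with matrix multiplication (for symplectic `M`). -/
lemma dotAct_mul (m : V4) (M N : M4) (hM : IsSp4 M) :
    dotAct (dotAct m M) N = dotAct m (M * N) := by
  have H : ∀ i i', (Mᵀ * J4 * M) i i' = J4 i i' := fun i i' => by rw [hM]
  have h01 := H 0 1; have h02 := H 0 2; have h03 := H 0 3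
  have h12 := H 1 2; have h13 := H 1 3; have h23 := H 2 3
  simp [J4, Matrix.mul_apply, Matrix.transpose_apply, Fin.sum_univ_four,
    Matrix.cons_val_zero, Matrix.cons_val_one, Matrix.head_cons] at h01 h02 h03 h12 h13 h23
  funext j
  simp only [dotAct, Matrix.vecMul, dotProduct, Matrix.mul_apply, Fin.sum_univ_four]
  linear_combination
    (M 2 0 * M 0 0 + M 3 0 * M 1 0) * sq2 (N 0 j) +
    (M 2 1 * M 0 1 + M 3 1 * M 1 1) * sq2 (N 1 j) +
    (M 2 2 * M 0 2 + M 3 2 * M 1 2) * sq2 (N 2 j) +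
    (M 2 3 * M 0 3 + M 3 3 * M 1 3) * sq2 (N 3 j) +
    (N 0 j * N 1 j) * h01 + (N 0 j * N 2 j) * h02 + (N 0 j * N 3 j) * h03 +
    (N 1 j * N 2 j) * h12 + (N 1 j * N 3 j) * h13 + (N 2 j * N 3 j) * h23

lemma J4_sq : J4 * J4 = 1 := by decide

lemma dotAct_one (m : V4) : dotAct m 1 = m := by
  funext j
  fin_cases j <;> simp [dotAct, Matrix.vecMul_one, Matrix.one_apply]

lemma sp_mul {M N : M4} (hM : IsSp4 M) (hN : IsSp4 N) : IsSp4 (M * N) := by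
  unfold IsSp4 at *
  rw [Matrix.transpose_mul]
  calc Nᵀ * Mᵀ * J4 * (M * N) = Nᵀ * (Mᵀ * J4 * M) * N := by
        simp only [Matrix.mul_assoc]
    _ = J4 := by rw [hM, hN]

lemma sp_inv {M : M4} (hM : IsSp4 M) :
    IsSp4 (J4 * Mᵀ * J4) ∧ M * (J4 * Mᵀ * J4) = 1 := by
  have hleft : (J4 * Mᵀ * J4) * M = 1 := by
    calc (J4 * Mᵀ * J4) * M = J4 * (Mᵀ * J4 * M) := by simp only [Matrix.mul_assoc]
      _ = 1 := by rw [hM, J4_sq]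
  have hright : M * (J4 * Mᵀ * J4) = 1 := mul_eq_one_comm.mp hleft
  refine ⟨?_, hright⟩
  unfold IsSp4 at *
  calc (J4 * Mᵀ * J4)ᵀ * J4 * (J4 * Mᵀ * J4)
      = (J4 * Mᵀ * J4)ᵀ * (Mᵀ * J4 * M) * (J4 * Mᵀ * J4) := by rw [hM]
    _ = (M * (J4 * Mᵀ * J4))ᵀ * J4 * (M * (J4 * Mᵀ * J4)) := by
        simp only [Matrix.transpose_mul, Matrix.mul_assoc]
    _ = J4 := by rw [hright]; simp

/-- `M₁` carries `b` to `x`, `M₂` carries `b` to `x'`; then `M₁⁻¹M₂` carries `x` to `x'`. -/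
lemma transfer {b x x' : V4} {M1 M2 : M4} (hP : IsSp4 M1) (hQ : IsSp4 M2)
    (h1 : dotAct b M1 = x) (h2 : dotAct b M2 = x') :
    dotAct x ((J4 * M1ᵀ * J4) * M2) = x' := by
  obtain ⟨hNsp, hMN⟩ := sp_inv hP
  rw [← dotAct_mul x _ _ hNsp]
  have hxN : dotAct x (J4 * M1ᵀ * J4) = b := by
    rw [← h1, dotAct_mul _ _ _ hP, hMN, dotAct_one]
  rw [hxN, h2]

/-- Decode a vector in `V4` from the 4 low bits of a natural number. -/
def decV (n : ℕ) : V4 := fun i => ((n >>> i.val) % 2 : ℕ)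

/-- Decode a matrix in `M4` from the 16 low bits of a natural number. -/
def decM (n : ℕ) : M4 := Matrix.of fun i j => ((n >>> (4 * i.val + j.val)) % 2 : ℕ)

set_option maxHeartbeats 4000000
set_option maxRecDepth 1000000
set_option synthInstance.maxHeartbeats 2000000

def Wsyz : List (ℕ × ℕ × ℕ × ℕ) := [(0,8,4,33825),
  (0,8,12,35889),
  (0,8,1,33060),
  (0,8,9,35172),
  (0,4,8,18450),
  (0,4,12,19506),
  (0,4,2,16920),
  (0,4,6,18072),
  (0,12,8,51219),
  (0,12,4,50211),
  (0,12,3,49944),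
  (0,12,15,53144),
  (0,2,4,9345),
  (0,2,6,9873),
  (0,2,1,8580),
  (0,2,3,9156),
  (0,6,4,25737),
  (0,6,2,25113),
  (0,6,9,27012),
  (0,6,15,28612),
  (0,1,8,6210),
  (0,1,2,4680),
  (0,1,9,6498),
  (0,1,3,5064),
  (0,9,8,38982),
  (0,9,6,38472),
  (0,9,1,37158),
  (0,9,15,40904),
  (0,3,12,15426),
  (0,3,2,12876),
  (0,3,1,12684),
  (0,3,15,16226),
  (0,15,12,64582),
  (0,15,6,63052),
  (0,15,9,63884),
  (0,15,3,62246),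
  (8,0,4,36017),
  (8,0,12,33953),
  (8,0,1,35300),
  (8,0,9,33188),
  (8,4,0,51227),
  (8,4,12,50347),
  (8,4,3,51992),
  (8,4,15,51096),
  (8,12,0,18458),
  (8,12,4,19642),
  (8,12,2,18968),
  (8,12,6,20120),
  (8,2,12,42113),
  (8,2,6,44689),
  (8,2,9,41348),
  (8,2,3,43972),
  (8,6,12,58505),
  (8,6,2,59929),
  (8,6,1,59780),
  (8,6,15,59332),
  (8,1,0,38990),
  (8,1,6,40520),
  (8,1,9,37294),
  (8,1,15,38856),
  (8,9,0,6218),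
  (8,9,2,6728),
  (8,9,1,6634),
  (8,9,3,7112),
  (8,3,4,48202),
  (8,3,2,47692),
  (8,3,9,45452),
  (8,3,15,47082),
  (8,15,4,31822),
  (8,15,6,32332),
  (8,15,1,31116),
  (8,15,3,31662),
  (4,0,8,19570),
  (4,0,12,18514),
  (4,0,2,18136),
  (4,0,6,16984),
  (4,8,0,50283),
  (4,8,12,51419),
  (4,8,3,51032),
  (4,8,15,52184),
  (4,12,0,33829),
  (4,12,8,35957),
  (4,12,1,34084),
  (4,12,9,36196),
  (4,2,0,25741),
  (4,2,6,25181),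
  (4,2,9,28036),
  (4,2,15,27588),
  (4,6,0,9349),
  (4,6,2,9941),
  (4,6,1,9604),
  (4,6,3,10180),
  (4,1,12,22594),
  (4,1,6,21064),
  (4,1,9,23906),
  (4,1,3,22472),
  (4,9,12,55366),
  (4,9,2,54856),
  (4,9,1,54566),
  (4,9,15,56264),
  (4,3,8,31810),
  (4,3,6,29260),
  (4,3,1,30092),
  (4,3,15,31586),
  (4,15,8,48198),
  (4,15,2,46668),
  (4,15,9,48524),
  (4,15,3,46886),
  (12,0,8,50403),
  (12,0,4,51411),
  (12,0,3,53080),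
  (12,0,15,50136),
  (12,8,0,19706),
  (12,8,4,18522),
  (12,8,2,20184),
  (12,8,6,19032),
  (12,4,0,36085),
  (12,4,8,33957),
  (12,4,1,36324),
  (12,4,9,34212),
  (12,2,8,58509),
  (12,2,6,59997),
  (12,2,1,60804),
  (12,2,15,58308),
  (12,6,8,42117),
  (12,6,2,44757),
  (12,6,9,42372),
  (12,6,3,44996),
  (12,1,4,55374),
  (12,1,2,56904),
  (12,1,9,54702),
  (12,1,15,54216),
  (12,9,4,22602),
  (12,9,6,23112),
  (12,9,1,24042),
  (12,9,3,24520),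
  (12,3,0,64586),
  (12,3,6,64076),
  (12,3,9,62860),
  (12,3,15,62442),
  (12,15,0,15438),
  (12,15,2,15948),
  (12,15,1,15756),
  (12,15,3,16302),
  (2,0,4,9905),
  (2,0,6,9377),
  (2,0,1,9188),
  (2,0,3,8612),
  (2,8,12,44593),
  (2,8,6,42017),
  (2,8,9,43876),
  (2,8,3,41252),
  (2,4,0,25149),
  (2,4,6,25837),
  (2,4,9,27556),
  (2,4,15,28132),
  (2,12,8,60093),
  (2,12,6,58477),
  (2,12,1,58148),
  (2,12,15,60772),
  (2,6,0,16922),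
  (2,6,8,18962),
  (2,6,4,18106),
  (2,6,12,20018),
  (2,1,0,12878),
  (2,1,12,15938),
  (2,1,3,12718),
  (2,1,15,15714),
  (2,9,8,47686),
  (2,9,4,46666),
  (2,9,3,45350),
  (2,9,15,48618),
  (2,3,0,4682),
  (2,3,8,6722),
  (2,3,1,5098),
  (2,3,9,7010),
  (2,15,4,54862),
  (2,15,12,56902),
  (2,15,1,54054),
  (2,15,9,56238),
  (6,0,4,25209),
  (6,0,2,25833),
  (6,0,9,28580),
  (6,0,15,27108),
  (6,8,12,60153),
  (6,8,2,58473),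
  (6,8,1,59172),
  (6,8,15,59748),
  (6,4,0,9973),
  (6,4,2,9381),
  (6,4,1,10212),
  (6,4,3,9636),
  (6,12,8,44661),
  (6,12,2,42021),
  (6,12,9,44900),
  (6,12,3,42276),
  (6,2,0,18170),
  (6,2,8,20082),
  (6,2,4,16986),
  (6,2,12,19026),
  (6,1,8,32322),
  (6,1,4,29262),
  (6,1,3,30126),
  (6,1,15,31074),
  (6,9,0,63050),
  (6,9,12,64070),
  (6,9,3,62758),
  (6,9,15,63978),
  (6,3,4,21066),
  (6,3,12,23106),
  (6,3,1,22506),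
  (6,3,9,24418),
  (6,15,0,38478),
  (6,15,8,40518),
  (6,15,1,38694),
  (6,15,9,40878),
  (1,0,8,6514),
  (1,0,2,5080),
  (1,0,9,6226),
  (1,0,3,4696),
  (1,8,0,37182),
  (1,8,6,38744),
  (1,8,9,39134),
  (1,8,15,40664),
  (1,4,12,23858),
  (1,4,6,22424),
  (1,4,9,22546),
  (1,4,3,21016),
  (1,12,4,54654),
  (1,12,2,54040),
  (1,12,9,55454),
  (1,12,15,56984),
  (1,2,0,12702),
  (1,2,12,15698),
  (1,2,3,12926),
  (1,2,15,15986),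
  (1,6,8,30994),
  (1,6,4,30174),
  (1,6,3,29246),
  (1,6,15,32306),
  (1,9,0,33061),
  (1,9,8,35189),
  (1,9,4,34081),
  (1,9,12,36145),
  (1,3,0,8581),
  (1,3,4,9601),
  (1,3,2,9173),
  (1,3,6,10129),
  (1,15,8,59789),
  (1,15,12,60809),
  (1,15,2,58137),
  (1,15,6,59229),
  (9,0,8,37302),
  (9,0,6,40792),
  (9,0,1,39126),
  (9,0,15,38616),
  (9,8,0,6650),
  (9,8,2,7128),
  (9,8,1,6234),
  (9,8,3,6744),
  (9,4,12,54774),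
  (9,4,2,56088),
  (9,4,1,55446),
  (9,4,15,54936),
  (9,12,4,23994),
  (9,12,6,24472),
  (9,12,1,22554),
  (9,12,3,23064),
  (9,2,8,45462),
  (9,2,4,48474),
  (9,2,3,47862),
  (9,2,15,46842),
  (9,6,0,63770),
  (9,6,12,62934),
  (9,6,3,64182),
  (9,6,15,63162),
  (9,1,0,35317),
  (9,1,8,33189),
  (9,1,4,36273),
  (9,1,12,34209),
  (9,3,8,41349),
  (9,3,12,42369),
  (9,3,2,43989),
  (9,3,6,44945),
  (9,15,0,27021),
  (9,15,4,28041),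
  (9,15,2,27417),
  (9,15,6,28509),
  (3,0,12,16210),
  (3,0,2,12732),
  (3,0,1,12924),
  (3,0,15,15474),
  (3,8,4,46938),
  (3,8,2,45372),
  (3,8,9,47868),
  (3,8,15,48378),
  (3,4,8,31506),
  (3,4,6,30204),
  (3,4,1,29244),
  (3,4,15,31794),
  (3,12,0,62234),
  (3,12,6,62844),
  (3,12,9,64188),
  (3,12,15,64698),
  (3,2,0,5114),
  (3,2,8,7026),
  (3,2,1,4698),
  (3,2,9,6738),
  (3,6,4,22458),
  (3,6,12,24370),
  (3,6,1,21018),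
  (3,6,9,23058),
  (3,1,0,9205),
  (3,1,4,10161),
  (3,1,2,8613),
  (3,1,6,9633),
  (3,9,8,43893),
  (3,9,12,44849),
  (3,9,2,41253),
  (3,9,6,42273),
  (3,15,0,49947),
  (3,15,8,51987),
  (3,15,4,50979),
  (3,15,12,53163),
  (15,0,12,62422),
  (15,0,6,63868),
  (15,0,9,63164),
  (15,0,3,64694),
  (15,8,4,31710),
  (15,8,6,31228),
  (15,8,1,32316),
  (15,8,3,31806),
  (15,4,8,46998),
  (15,4,2,48444),
  (15,4,9,46844),
  (15,4,3,48374),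
  (15,12,0,16286),
  (15,12,2,15804),
  (15,12,1,15996),
  (15,12,3,15486),
  (15,2,4,56190),
  (15,2,12,54262),
  (15,2,1,56982),
  (15,2,9,54942),
  (15,6,0,40766),
  (15,6,8,38838),
  (15,6,1,40662),
  (15,6,9,38622),
  (15,1,8,59325),
  (15,1,12,58361),
  (15,1,2,60777),
  (15,1,6,59757),
  (15,9,0,28477),
  (15,9,4,27513),
  (15,9,2,28137),
  (15,9,6,27117),
  (15,3,0,53099),
  (15,3,8,51171),
  (15,3,4,52179),
  (15,3,12,50139)]

def Wazy : List (ℕ × ℕ × ℕ × ℕ) := [(0,8,2,33060),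
  (0,8,6,35172),
  (0,8,3,33084),
  (0,8,15,35324),
  (0,4,1,16920),
  (0,4,9,18072),
  (0,4,3,16956),
  (0,4,15,18172),
  (0,12,2,49956),
  (0,12,6,53092),
  (0,12,1,49944),
  (0,12,9,53144),
  (0,2,8,8580),
  (0,2,12,9156),
  (0,2,9,8598),
  (0,2,15,9206),
  (0,6,8,27012),
  (0,6,12,28612),
  (0,6,1,26898),
  (0,6,3,28466),
  (0,1,4,4680),
  (0,1,12,5064),
  (0,1,6,6498),
  (0,1,15,5113),
  (0,9,4,38472),
  (0,9,12,40904),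
  (0,9,2,37158),
  (0,9,3,40753),
  (0,3,8,12684),
  (0,3,4,12876),
  (0,3,6,16226),
  (0,3,9,16273),
  (0,15,8,63884),
  (0,15,4,63052),
  (0,15,2,62246),
  (0,15,1,62233),
  (8,0,2,33188),
  (8,0,6,35300),
  (8,0,3,33212),
  (8,0,15,35196),
  (8,4,2,52132),
  (8,4,6,51172),
  (8,4,1,51096),
  (8,4,9,51992),
  (8,12,1,20120),
  (8,12,9,18968),
  (8,12,3,19132),
  (8,12,15,20092),
  (8,2,0,41348),
  (8,2,4,43972),
  (8,2,1,41374),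
  (8,2,15,43902),
  (8,6,0,59780),
  (8,6,4,59332),
  (8,6,9,59674),
  (8,6,3,59322),
  (8,1,4,38856),
  (8,1,12,40520),
  (8,1,2,37294),
  (8,1,3,38833),
  (8,9,4,7112),
  (8,9,12,6728),
  (8,9,6,6634),
  (8,9,15,7033),
  (8,3,0,45452),
  (8,3,12,47692),
  (8,3,6,47082),
  (8,3,1,46993),
  (8,15,0,31116),
  (8,15,12,32332),
  (8,15,2,31662),
  (8,15,9,31513),
  (4,0,1,16984),
  (4,0,9,18136),
  (4,0,3,17020),
  (4,0,15,18108),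
  (4,8,2,52068),
  (4,8,6,50980),
  (4,8,1,51032),
  (4,8,9,52184),
  (4,12,2,36196),
  (4,12,6,34084),
  (4,12,3,34172),
  (4,12,15,36284),
  (4,2,8,27588),
  (4,2,12,28036),
  (4,2,1,27986),
  (4,2,3,27506),
  (4,6,8,10180),
  (4,6,12,9604),
  (4,6,9,9686),
  (4,6,15,10166),
  (4,1,0,21064),
  (4,1,8,22472),
  (4,1,2,23906),
  (4,1,15,22461),
  (4,9,0,54856),
  (4,9,8,56264),
  (4,9,6,54566),
  (4,9,3,56181),
  (4,3,0,29260),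
  (4,3,12,30092),
  (4,3,2,31586),
  (4,3,9,31701),
  (4,15,0,46668),
  (4,15,12,48524),
  (4,15,6,46886),
  (4,15,1,46941),
  (12,0,2,50148),
  (12,0,6,53156),
  (12,0,1,50136),
  (12,0,9,53080),
  (12,8,1,20184),
  (12,8,9,19032),
  (12,8,3,19196),
  (12,8,15,20028),
  (12,4,2,36324),
  (12,4,6,34212),
  (12,4,3,34300),
  (12,4,15,36156),
  (12,2,0,58308),
  (12,2,4,60804),
  (12,2,9,60762),
  (12,2,3,58362),
  (12,6,0,44996),
  (12,6,4,42372),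
  (12,6,1,42462),
  (12,6,15,44862),
  (12,1,0,54216),
  (12,1,8,56904),
  (12,1,6,54702),
  (12,1,3,54261),
  (12,9,0,24520),
  (12,9,8,23112),
  (12,9,2,24042),
  (12,9,15,24381),
  (12,3,8,64076),
  (12,3,4,62860),
  (12,3,2,62442),
  (12,3,1,62421),
  (12,15,8,15948),
  (12,15,4,15756),
  (12,15,6,16302),
  (12,15,9,16221),
  (2,0,8,8612),
  (2,0,12,9188),
  (2,0,9,8630),
  (2,0,15,9174),
  (2,8,0,41252),
  (2,8,4,43876),
  (2,8,1,41278),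
  (2,8,15,43998),
  (2,4,8,27556),
  (2,4,12,28132),
  (2,4,1,27954),
  (2,4,3,27410),
  (2,12,0,58148),
  (2,12,4,60772),
  (2,12,9,60858),
  (2,12,3,58138),
  (2,6,1,20018),
  (2,6,9,18106),
  (2,6,3,18962),
  (2,6,15,20182),
  (2,1,8,12718),
  (2,1,4,15714),
  (2,1,6,15938),
  (2,1,9,15793),
  (2,9,0,45350),
  (2,9,12,48618),
  (2,9,6,46666),
  (2,9,1,48433),
  (2,3,4,7010),
  (2,3,12,5098),
  (2,3,6,6722),
  (2,3,15,7123),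
  (2,15,0,54054),
  (2,15,8,56238),
  (2,15,6,56902),
  (2,15,3,56083),
  (6,0,8,27108),
  (6,0,12,28580),
  (6,0,1,26994),
  (6,0,3,28498),
  (6,8,0,59748),
  (6,8,4,59172),
  (6,8,9,59898),
  (6,8,3,59226),
  (6,4,8,10212),
  (6,4,12,9636),
  (6,4,9,9718),
  (6,4,15,10134),
  (6,12,0,44900),
  (6,12,4,42276),
  (6,12,1,42366),
  (6,12,15,44958),
  (6,2,1,20082),
  (6,2,9,18170),
  (6,2,3,19026),
  (6,2,15,20118),
  (6,1,0,31074),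
  (6,1,12,30126),
  (6,1,2,32322),
  (6,1,9,30201),
  (6,9,8,63978),
  (6,9,4,62758),
  (6,9,2,63050),
  (6,9,1,62841),
  (6,3,0,24418),
  (6,3,8,22506),
  (6,3,2,23106),
  (6,3,15,24471),
  (6,15,4,38694),
  (6,15,12,40878),
  (6,15,2,40518),
  (6,15,3,40791),
  (1,0,4,4696),
  (1,0,12,5080),
  (1,0,6,6514),
  (1,0,15,5097),
  (1,8,4,38744),
  (1,8,12,40664),
  (1,8,2,37182),
  (1,8,3,38689),
  (1,4,0,21016),
  (1,4,8,22424),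
  (1,4,2,23858),
  (1,4,15,22509),
  (1,12,0,54040),
  (1,12,8,56984),
  (1,12,6,54654),
  (1,12,3,54053),
  (1,2,8,12702),
  (1,2,4,15698),
  (1,2,6,15986),
  (1,2,9,15745),
  (1,6,0,30994),
  (1,6,12,30174),
  (1,6,2,32306),
  (1,6,9,30089),
  (1,9,2,36145),
  (1,9,6,34169),
  (1,9,3,34081),
  (1,9,15,36329),
  (1,3,8,10129),
  (1,3,12,9173),
  (1,3,9,9601),
  (1,3,15,10211),
  (1,15,0,58137),
  (1,15,4,59229),
  (1,15,9,60809),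
  (1,15,3,59171),
  (9,0,4,38616),
  (9,0,12,40792),
  (9,0,2,37302),
  (9,0,3,40865),
  (9,8,4,7128),
  (9,8,12,6744),
  (9,8,6,6650),
  (9,8,15,7017),
  (9,4,0,54936),
  (9,4,8,56088),
  (9,4,6,54774),
  (9,4,3,56229),
  (9,12,0,24472),
  (9,12,8,23064),
  (9,12,2,23994),
  (9,12,15,24429),
  (9,2,0,45462),
  (9,2,12,48474),
  (9,2,6,46842),
  (9,2,1,48513),
  (9,6,8,63770),
  (9,6,4,62934),
  (9,6,2,63162),
  (9,6,1,62857),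
  (9,1,2,36273),
  (9,1,6,34297),
  (9,1,3,34209),
  (9,1,15,36201),
  (9,3,0,44945),
  (9,3,4,43989),
  (9,3,1,42369),
  (9,3,15,44907),
  (9,15,8,27417),
  (9,15,12,28509),
  (9,15,1,28041),
  (9,15,3,28587),
  (3,0,8,12732),
  (3,0,4,12924),
  (3,0,6,16210),
  (3,0,9,16289),
  (3,8,0,45372),
  (3,8,12,47868),
  (3,8,6,46938),
  (3,8,1,46881),
  (3,4,0,29244),
  (3,4,12,30204),
  (3,4,2,31506),
  (3,4,9,31653),
  (3,12,8,64188),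
  (3,12,4,62844),
  (3,12,2,62234),
  (3,12,1,62245),
  (3,2,4,7026),
  (3,2,12,5114),
  (3,2,6,6738),
  (3,2,15,7107),
  (3,6,0,24370),
  (3,6,8,22458),
  (3,6,2,23058),
  (3,6,15,24519),
  (3,1,8,10161),
  (3,1,12,9205),
  (3,1,9,9633),
  (3,1,15,10179),
  (3,9,0,44849),
  (3,9,4,43893),
  (3,9,1,42273),
  (3,9,15,45003),
  (3,15,2,51987),
  (3,15,6,53079),
  (3,15,1,50979),
  (3,15,9,53163),
  (15,0,8,63868),
  (15,0,4,63164),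
  (15,0,2,62422),
  (15,0,1,62441),
  (15,8,0,31228),
  (15,8,12,32316),
  (15,8,2,31710),
  (15,8,9,31593),
  (15,4,0,46844),
  (15,4,12,48444),
  (15,4,6,46998),
  (15,4,1,47085),
  (15,12,8,15996),
  (15,12,4,15804),
  (15,12,6,16286),
  (15,12,9,16237),
  (15,2,0,54262),
  (15,2,8,56190),
  (15,2,6,56982),
  (15,2,3,56259),
  (15,6,4,38838),
  (15,6,12,40766),
  (15,6,2,40662),
  (15,6,3,40903),
  (15,1,0,58361),
  (15,1,4,59325),
  (15,1,9,60777),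
  (15,1,3,59331),
  (15,9,8,27513),
  (15,9,12,28477),
  (15,9,1,28137),
  (15,9,3,28619),
  (15,3,2,52179),
  (15,3,6,53143),
  (15,3,1,51171),
  (15,3,9,53099)]

lemma Wsyz_ok : ∀ p ∈ Wsyz, IsSp4 (decM p.2.2.2) ∧ dotAct v0000 (decM p.2.2.2) = decV p.1 ∧
    dotAct v0001 (decM p.2.2.2) = decV p.2.1 ∧ dotAct v0010 (decM p.2.2.2) = decV p.2.2.1 := by
  decide

lemma Wazy_ok : ∀ p ∈ Wazy, IsSp4 (decM p.2.2.2) ∧ dotAct v0000 (decM p.2.2.2) = decV p.1 ∧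
    dotAct v0001 (decM p.2.2.2) = decV p.2.1 ∧ dotAct v0100 (decM p.2.2.2) = decV p.2.2.1 := by
  decide

lemma Wsyz_cov : ∀ x y z : V4, q2 x = 0 → q2 y = 0 → q2 z = 0 →
    x ≠ y → x ≠ z → y ≠ z → eSyz x y z = 0 →
    ∃ p : ℕ × ℕ × ℕ × ℕ, p ∈ Wsyz ∧ decV p.1 = x ∧ decV p.2.1 = y ∧ decV p.2.2.1 = z := by
  decide

lemma F2_eq_one : ∀ a : F2, a ≠ 0 → a = 1 := by decide

lemma Wazy_cov : ∀ x y z : V4, q2 x = 0 → q2 y = 0 → q2 z = 0 →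
    x ≠ y → x ≠ z → y ≠ z → eSyz x y z = 1 →
    ∃ p : ℕ × ℕ × ℕ × ℕ, p ∈ Wazy ∧ decV p.1 = x ∧ decV p.2.1 = y ∧ decV p.2.2.1 = z := by
  decide

/-- the dot action is transitive on ordered syzygous triples and on
ordered azygous triples of `E`. -/
theorem dotAct_transitive_on_triples (x y z x' y' z' : V4)
    (hx : x ∈ Echar) (hy : y ∈ Echar) (hz : z ∈ Echar)
    (hx' : x' ∈ Echar) (hy' : y' ∈ Echar) (hz' : z' ∈ Echar)
    (hxy : x ≠ y) (hxz : x ≠ z) (hyz : y ≠ z)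
    (hxy' : x' ≠ y') (hxz' : x' ≠ z') (hyz' : y' ≠ z')
    (h : (eSyz x y z = 0 ∧ eSyz x' y' z' = 0) ∨ (eSyz x y z ≠ 0 ∧ eSyz x' y' z' ≠ 0)) :
    ∃ M : M4, IsSp4 M ∧ dotAct x M = x' ∧ dotAct y M = y' ∧ dotAct z M = z' := by
  have hx0 : q2 x = 0 := (Finset.mem_filter.mp hx).2
  have hy0 : q2 y = 0 := (Finset.mem_filter.mp hy).2
  have hz0 : q2 z = 0 := (Finset.mem_filter.mp hz).2
  have hx'0 : q2 x' = 0 := (Finset.mem_filter.mp hx').2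
  have hy'0 : q2 y' = 0 := (Finset.mem_filter.mp hy').2
  have hz'0 : q2 z' = 0 := (Finset.mem_filter.mp hz').2
  rcases h with ⟨h1, h2⟩ | ⟨h1, h2⟩
  · obtain ⟨p, hp, hpx, hpy, hpz⟩ := Wsyz_cov x y z hx0 hy0 hz0 hxy hxz hyz h1
    obtain ⟨q, hq, hqx, hqy, hqz⟩ := Wsyz_cov x' y' z' hx'0 hy'0 hz'0 hxy' hxz' hyz' h2
    obtain ⟨hP, hp1, hp2, hp3⟩ := Wsyz_ok p hp
    obtain ⟨hQ, hq1, hq2, hq3⟩ := Wsyz_ok q hq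
    exact ⟨(J4 * (decM p.2.2.2)ᵀ * J4) * decM q.2.2.2,
      sp_mul (sp_inv hP).1 hQ,
      transfer hP hQ (hp1.trans hpx) (hq1.trans hqx),
      transfer hP hQ (hp2.trans hpy) (hq2.trans hqy),
      transfer hP hQ (hp3.trans hpz) (hq3.trans hqz)⟩
  · obtain ⟨p, hp, hpx, hpy, hpz⟩ := Wazy_cov x y z hx0 hy0 hz0 hxy hxz hyz (F2_eq_one _ h1)
    obtain ⟨q, hq, hqx, hqy, hqz⟩ := Wazy_cov x' y' z' hx'0 hy'0 hz'0 hxy' hxz' hyz' (F2_eq_one _ h2)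
    obtain ⟨hP, hp1, hp2, hp3⟩ := Wazy_ok p hp
    obtain ⟨hQ, hq1, hq2, hq3⟩ := Wazy_ok q hq
    exact ⟨(J4 * (decM p.2.2.2)ᵀ * J4) * decM q.2.2.2,
      sp_mul (sp_inv hP).1 hQ,
      transfer hP hQ (hp1.trans hpx) (hq1.trans hqx),
      transfer hP hQ (hp2.trans hpy) (hq2.trans hqy),
      transfer hP hQ (hp3.trans hpz) (hq3.trans hqz)⟩
end

section
/- For any two distinct elements x, y ∈ E, there are exactly 4 elements z ∈ E \ {x, y} such that {x, y, z} is a syzygous triple, and exactly 4 elements z ∈ E \ {x, y} such that {x, y, z} is an azygous triple. -/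
open Matrix BigOperators

/-- any two distinct elements of `E` can be completed into exactly 4
syzygous triples and exactly 4 azygous triples. -/
theorem completions_of_pair (x y : V4) (hx : x ∈ Echar) (hy : y ∈ Echar) (hxy : x ≠ y) :
    {z : V4 | z ∈ Echar ∧ z ≠ x ∧ z ≠ y ∧ eSyz x y z = 0}.ncard = 4 ∧
    {z : V4 | z ∈ Echar ∧ z ≠ x ∧ z ≠ y ∧ eSyz x y z ≠ 0}.ncard = 4 := by
  have key : ∀ x y : V4, x ∈ Echar → y ∈ Echar → x ≠ y →
      (Echar.filter (fun z => z ≠ x ∧ z ≠ y ∧ eSyz x y z = 0)).card = 4 ∧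
      (Echar.filter (fun z => z ≠ x ∧ z ≠ y ∧ eSyz x y z ≠ 0)).card = 4 := by decide
  have h := key x y hx hy hxy
  constructor
  · have : {z : V4 | z ∈ Echar ∧ z ≠ x ∧ z ≠ y ∧ eSyz x y z = 0} =
        ↑(Echar.filter (fun z => z ≠ x ∧ z ≠ y ∧ eSyz x y z = 0)) := by
      ext z; simp [Finset.mem_filter, and_assoc]
    rw [this, Set.ncard_coe_finset, h.1]
  · have : {z : V4 | z ∈ Echar ∧ z ≠ x ∧ z ≠ y ∧ eSyz x y z ≠ 0} =
        ↑(Echar.filter (fun z => z ≠ x ∧ z ≠ y ∧ eSyz x y z ≠ 0)) := by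
      ext z; simp [Finset.mem_filter, and_assoc]
    rw [this, Set.ncard_coe_finset, h.2]
end

section
/- Every syzygous triple in E is contained in exactly one Göpel quadruple, and every azygous triple in E is contained in exactly one azygous quadruple. -/
open Matrix BigOperators

/-- Packaged predicate: `w` completes the triple `x,y,z` to a quadruple of type `c`. -/
def Pcomp (c : F2) (x y z w : V4) : Prop := q2 w = 0 ∧ w ≠ x ∧ w ≠ y ∧ w ≠ z ∧
    eSyz x y w = c ∧ eSyz x z w = c ∧ eSyz y z w = c

instance (c : F2) (x y z w : V4) : Decidable (Pcomp c x y z w) := by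
  unfold Pcomp; infer_instance

set_option maxHeartbeats 4000000 in
lemma key_lemma : ∀ c : F2, ∀ x y z : V4, q2 x = 0 → q2 y = 0 → q2 z = 0 →
    x ≠ y → x ≠ z → y ≠ z → eSyz x y z = c →
    ∃ w : V4, Pcomp c x y z w ∧ ∀ v : V4, Pcomp c x y z v → v = w := by decide

lemma eSyz_comm12 (a b c : V4) : eSyz a b c = eSyz b a c := by
  unfold eSyz; rw [show a + b + c = b + a + c by ring]; ring

lemma eSyz_comm23 (a b c : V4) : eSyz a b c = eSyz a c b := by
  unfold eSyz; rw [show a + b + c = a + c + b by ring]; ring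

lemma pm12 {a b c : V4} {r : F2} (h : eSyz a b c = r) : eSyz b a c = r := by
  rw [eSyz_comm12]; exact h

lemma pm23 {a b c : V4} {r : F2} (h : eSyz a b c = r) : eSyz a c b = r := by
  rw [eSyz_comm23]; exact h

lemma mem_Echar {m : V4} : m ∈ Echar ↔ q2 m = 0 := by simp [Echar]

set_option maxHeartbeats 4000000 in
lemma glue (c : F2) (p : F2 → Prop) (hp : ∀ a, p a ↔ a = c)
    (T : Finset V4) (hTE : T ⊆ Echar) (hT3 : T.card = 3)
    (hTs : ∀ x ∈ T, ∀ y ∈ T, ∀ z ∈ T, x ≠ y → x ≠ z → y ≠ z → p (eSyz x y z)) :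
    ∃! Q : Finset V4, (Q ⊆ Echar ∧ Q.card = 4 ∧
      ∀ x ∈ Q, ∀ y ∈ Q, ∀ z ∈ Q, x ≠ y → x ≠ z → y ≠ z → p (eSyz x y z)) ∧ T ⊆ Q := by
  obtain ⟨x, y, z, hxy, hxz, hyz, rfl⟩ := Finset.card_eq_three.mp hT3
  have hx : q2 x = 0 := mem_Echar.1 (hTE (by simp))
  have hy : q2 y = 0 := mem_Echar.1 (hTE (by simp))
  have hz : q2 z = 0 := mem_Echar.1 (hTE (by simp))
  have he : eSyz x y z = c := (hp _).1 (hTs x (by simp) y (by simp) z (by simp) hxy hxz hyz)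
  obtain ⟨w, ⟨hwq, hwx, hwy, hwz, h1, h2, h3⟩, huniq⟩ :=
    key_lemma c x y z hx hy hz hxy hxz hyz he
  have hwT : w ∉ ({x, y, z} : Finset V4) := by simp [hwx, hwy, hwz]
  refine ⟨insert w {x, y, z}, ⟨⟨?_, ?_, ?_⟩, Finset.subset_insert _ _⟩, ?_⟩
  · intro a ha
    rw [mem_Echar]
    simp only [Finset.mem_insert, Finset.mem_singleton] at ha
    rcases ha with rfl | rfl | rfl | rfl <;> assumption
  · rw [Finset.card_insert_of_notMem hwT, hT3]
  · intro a ha b hb d hd hab had hbd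
    rw [hp]
    simp only [Finset.mem_insert, Finset.mem_singleton] at ha hb hd
    rcases ha with rfl | rfl | rfl | rfl <;> rcases hb with rfl | rfl | rfl | rfl <;>
      rcases hd with rfl | rfl | rfl | rfl <;>
      first
      | exact absurd rfl hab
      | exact absurd rfl had
      | exact absurd rfl hbd
      | exact he | exact pm12 he | exact pm23 he
      | exact pm12 (pm23 he) | exact pm23 (pm12 he) | exact pm12 (pm23 (pm12 he))
      | exact h1 | exact pm12 h1 | exact pm23 h1
      | exact pm12 (pm23 h1) | exact pm23 (pm12 h1) | exact pm12 (pm23 (pm12 h1))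
      | exact h2 | exact pm12 h2 | exact pm23 h2
      | exact pm12 (pm23 h2) | exact pm23 (pm12 h2) | exact pm12 (pm23 (pm12 h2))
      | exact h3 | exact pm12 h3 | exact pm23 h3
      | exact pm12 (pm23 h3) | exact pm23 (pm12 h3) | exact pm12 (pm23 (pm12 h3))
  · rintro Q ⟨⟨hQE, hQ4, hQs⟩, hTQ⟩
    have hcard : (Q \ {x, y, z}).card = 1 := by
      rw [Finset.card_sdiff_of_subset hTQ, hQ4, hT3]
    obtain ⟨v, hv⟩ := Finset.card_eq_one.mp hcard
    have hvmem : v ∈ Q \ ({x, y, z} : Finset V4) := hv ▸ Finset.mem_singleton_self v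
    have hvQ : v ∈ Q := (Finset.mem_sdiff.mp hvmem).1
    have hvT : v ∉ ({x, y, z} : Finset V4) := (Finset.mem_sdiff.mp hvmem).2
    have hvx : v ≠ x := fun h => hvT (by simp [h])
    have hvy : v ≠ y := fun h => hvT (by simp [h])
    have hvz : v ≠ z := fun h => hvT (by simp [h])
    have hxQ : x ∈ Q := hTQ (by simp)
    have hyQ : y ∈ Q := hTQ (by simp)
    have hzQ : z ∈ Q := hTQ (by simp)
    have hveq : v = w := huniq v ⟨mem_Echar.1 (hQE hvQ), hvx, hvy, hvz,
      (hp _).1 (hQs x hxQ y hyQ v hvQ hxy hvx.symm hvy.symm),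
      (hp _).1 (hQs x hxQ z hzQ v hvQ hxz hvx.symm hvz.symm),
      (hp _).1 (hQs y hyQ z hzQ v hvQ hyz hvy.symm hvz.symm)⟩
    subst hveq
    rw [← Finset.union_sdiff_of_subset hTQ, hv, Finset.union_comm]
    exact (Finset.insert_eq _ _).symm


/-- every syzygous triple is contained in exactly one Göpel quadruple,
and every azygous triple is contained in exactly one azygous quadruple. -/
theorem unique_quadruple_containing_triple :
    (∀ T : Finset V4, IsSyzTriple T → ∃! Q : Finset V4, IsGopel Q ∧ T ⊆ Q) ∧
    (∀ T : Finset V4, IsAzyTriple T → ∃! Q : Finset V4, IsAzyQuad Q ∧ T ⊆ Q) :=  by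
  constructor
  · rintro T ⟨h1, h2, h3⟩
    exact glue 0 (fun a => a = 0) (fun a => Iff.rfl) T h1 h2 h3
  · rintro T ⟨h1, h2, h3⟩
    exact glue 1 (fun a => a ≠ 0) (by decide) T h1 h2 h3
end

section
/- Every syzygous triple in E is disjoint from exactly two Göpel quadruples; every azygous quadruple in E is disjoint from exactly three Göpel quadruples; and any two Göpel quadruples in E have a common element (no two Göpel quadruples are disjoint). -/
open Matrix BigOperators

attribute [local instance 2000] Finset.decidableDforallFinset

set_option synthInstance.maxSize 3000 in
set_option synthInstance.maxHeartbeats 2000000 in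
instance : DecidablePred IsGopel := fun Q =>
  decidable_of_iff (Q ⊆ Echar ∧ Q.card = 4 ∧
    ∀ x ∈ Q, ∀ y ∈ Q, ∀ z ∈ Q, x ≠ y → x ≠ z → y ≠ z → eSyz x y z = 0) Iff.rfl

set_option synthInstance.maxSize 3000 in
set_option synthInstance.maxHeartbeats 2000000 in
instance : DecidablePred IsSyzTriple := fun T =>
  decidable_of_iff (T ⊆ Echar ∧ T.card = 3 ∧
    ∀ x ∈ T, ∀ y ∈ T, ∀ z ∈ T, x ≠ y → x ≠ z → y ≠ z → eSyz x y z = 0) Iff.rfl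

set_option synthInstance.maxSize 3000 in
set_option synthInstance.maxHeartbeats 2000000 in
instance : DecidablePred IsAzyQuad := fun Q =>
  decidable_of_iff (Q ⊆ Echar ∧ Q.card = 4 ∧
    ∀ x ∈ Q, ∀ y ∈ Q, ∀ z ∈ Q, x ≠ y → x ≠ z → y ≠ z → ¬ (eSyz x y z = 0)) Iff.rfl

/-- The fifteen Göpel quadruples. -/
def GopelSet : Finset (Finset V4) :=
  { {v0000, v0001, v0010, v0011},
    {v0000, v0001, v1000, v1001},
    {v0000, v0010, v0100, v0110},
    {v0000, v0011, v1100, v1111},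
    {v0000, v0100, v1000, v1100},
    {v0000, v0110, v1001, v1111},
    {v0001, v0010, v1100, v1111},
    {v0001, v0011, v0100, v0110},
    {v0001, v0100, v1001, v1100},
    {v0001, v0110, v1000, v1111},
    {v0010, v0011, v1000, v1001},
    {v0010, v0100, v1001, v1111},
    {v0010, v0110, v1000, v1100},
    {v0011, v0100, v1000, v1111},
    {v0011, v0110, v1001, v1100} }

set_option maxRecDepth 2000 in
lemma gopel_bounded : ∀ Q ∈ Echar.powersetCard 4, (IsGopel Q ↔ Q ∈ GopelSet) := by decide

set_option maxRecDepth 2000 in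
lemma gopelSet_gopel : ∀ Q ∈ GopelSet, IsGopel Q := by decide

lemma gopel_iff (Q : Finset V4) : IsGopel Q ↔ Q ∈ GopelSet := by
  constructor
  · intro h
    exact (gopel_bounded Q (Finset.mem_powersetCard.2 ⟨h.1, h.2.1⟩)).1 h
  · exact gopelSet_gopel Q

set_option maxRecDepth 2000 in
lemma syz_count : ∀ T ∈ Echar.powersetCard 3, IsSyzTriple T →
    (GopelSet.filter (fun Q => Disjoint T Q)).card = 2 := by decide

set_option maxRecDepth 2000 in
lemma azy_count : ∀ A ∈ Echar.powersetCard 4, IsAzyQuad A →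
    (GopelSet.filter (fun Q => Disjoint A Q)).card = 3 := by decide

set_option maxRecDepth 2000 in
lemma gopel_meet : ∀ Q ∈ GopelSet, ∀ Q' ∈ GopelSet, ¬ Disjoint Q Q' := by decide

lemma gopel_set_eq (T : Finset V4) :
    {Q : Finset V4 | IsGopel Q ∧ Disjoint T Q}
      = ↑(GopelSet.filter (fun Q => Disjoint T Q)) := by
  ext Q
  simp [gopel_iff, Finset.mem_filter]

/-- a syzygous triple is disjoint from exactly two Göpel quadruples, an
azygous quadruple is disjoint from exactly three Göpel quadruples, and any two Göpel
quadruples meet. -/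
theorem disjointness_with_Gopel :
    (∀ T : Finset V4, IsSyzTriple T →
      {Q : Finset V4 | IsGopel Q ∧ Disjoint T Q}.ncard = 2) ∧
    (∀ A : Finset V4, IsAzyQuad A →
      {Q : Finset V4 | IsGopel Q ∧ Disjoint A Q}.ncard = 3) ∧
    (∀ Q Q' : Finset V4, IsGopel Q → IsGopel Q' → ∃ m, m ∈ Q ∧ m ∈ Q') := by
  refine ⟨?_, ?_, ?_⟩
  · intro T hT
    rw [gopel_set_eq, Set.ncard_coe_finset]
    exact syz_count T (Finset.mem_powersetCard.2 ⟨hT.1, hT.2.1⟩) hT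
  · intro A hA
    rw [gopel_set_eq, Set.ncard_coe_finset]
    exact azy_count A (Finset.mem_powersetCard.2 ⟨hA.1, hA.2.1⟩) hA
  · intro Q Q' hQ hQ'
    have h := gopel_meet Q ((gopel_iff Q).1 hQ) Q' ((gopel_iff Q').1 hQ')
    obtain ⟨m, hm, hm'⟩ := Finset.not_disjoint_iff.1 h
    exact ⟨m, hm, hm'⟩
end

section
/- Let K be a number field, v a nonarchimedean absolute value on K, and x = (x_m)_{m∈E} a K-point of A₂(2)ˢ whose coordinates are not all zero; set M := max_{m'∈E} v(x_{m'}). Then the set {m ∈ E : v(x_m) < M} either has at most 4 elements or is contained in the complement in E of some Göpel quadruple. -/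
open Matrix BigOperators

section Aux

variable {K : Type*} [Field K] {v : K → ℝ}

lemma aux_vone (hv : IsNonarchAbsValue v) : v 1 = 1 := by
  have hm := hv.1.2.2.1 1 1
  rw [mul_one] at hm
  have h0 : v 1 ≠ 0 := fun h => one_ne_zero ((hv.1.2.1 1).mp h)
  have := mul_left_cancel₀ h0 (by linarith : v 1 * v 1 = v 1 * 1)
  linarith

lemma vneg (hv : IsNonarchAbsValue v) (a : K) : v (-a) = v a := by
  have h1 : v (-1 : K) = 1 := by
    have hm := hv.1.2.2.1 (-1 : K) (-1 : K)
    rw [neg_mul_neg, one_mul, aux_vone hv] at hm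
    have hge := hv.1.1 (-1 : K)
    nlinarith
  calc v (-a) = v ((-1 : K) * a) := by rw [neg_one_mul]
  _ = v (-1 : K) * v a := hv.1.2.2.1 _ _
  _ = v a := by rw [h1, one_mul]

lemma tri3 (hv : IsNonarchAbsValue v) (a b c : K) :
    v (a + b + c) ≤ max (v a) (max (v b) (v c)) := by
  calc v (a + b + c) ≤ max (v (a + b)) (v c) := hv.2 _ _
  _ ≤ max (max (v a) (v b)) (v c) := max_le_max (hv.2 a b) le_rfl
  _ = max (v a) (max (v b) (v c)) := max_assoc _ _ _

lemma step (hv : IsNonarchAbsValue v) {a b c d : K} {M : ℝ}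
    (h : a = b + c + d) (hb : v b < M) (hc : v c < M) (hd : v d < M) : v a < M := by
  rw [h]
  exact lt_of_le_of_lt (tri3 hv b c d) (max_lt hb (max_lt hc hd))

end Aux

lemma Echar_cases : ∀ m ∈ Echar, m = v0000 ∨ m = v0001 ∨ m = v0010 ∨ m = v0011 ∨ m = v0100 ∨ m = v0110 ∨ m = v1000 ∨ m = v1001 ∨ m = v1100 ∨ m = v1111 := by decide

lemma Echar_eq_lit : Echar = ({v0000, v0001, v0010, v0011, v0100, v0110, v1000, v1001, v1100, v1111} : Finset V4) := by decide

lemma gop0 : IsGopel ({v0000, v0001, v0010, v0011} : Finset V4) := by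
  unfold IsGopel
  decide

lemma gopmem0 : ∀ m ∈ ({v0000, v0001, v0010, v0011} : Finset V4), m = v0000 ∨ m = v0001 ∨ m = v0010 ∨ m = v0011 := by decide

lemma gop1 : IsGopel ({v0000, v0001, v1000, v1001} : Finset V4) := by
  unfold IsGopel
  decide

lemma gopmem1 : ∀ m ∈ ({v0000, v0001, v1000, v1001} : Finset V4), m = v0000 ∨ m = v0001 ∨ m = v1000 ∨ m = v1001 := by decide

lemma gop2 : IsGopel ({v0000, v0010, v0100, v0110} : Finset V4) := by
  unfold IsGopel
  decide

lemma gopmem2 : ∀ m ∈ ({v0000, v0010, v0100, v0110} : Finset V4), m = v0000 ∨ m = v0010 ∨ m = v0100 ∨ m = v0110 := by decide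

lemma gop3 : IsGopel ({v0000, v0011, v1100, v1111} : Finset V4) := by
  unfold IsGopel
  decide

lemma gopmem3 : ∀ m ∈ ({v0000, v0011, v1100, v1111} : Finset V4), m = v0000 ∨ m = v0011 ∨ m = v1100 ∨ m = v1111 := by decide

lemma gop4 : IsGopel ({v0000, v0100, v1000, v1100} : Finset V4) := by
  unfold IsGopel
  decide

lemma gopmem4 : ∀ m ∈ ({v0000, v0100, v1000, v1100} : Finset V4), m = v0000 ∨ m = v0100 ∨ m = v1000 ∨ m = v1100 := by decide

lemma gop5 : IsGopel ({v0000, v0110, v1001, v1111} : Finset V4) := by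
  unfold IsGopel
  decide

lemma gopmem5 : ∀ m ∈ ({v0000, v0110, v1001, v1111} : Finset V4), m = v0000 ∨ m = v0110 ∨ m = v1001 ∨ m = v1111 := by decide

lemma gop6 : IsGopel ({v0001, v0010, v1100, v1111} : Finset V4) := by
  unfold IsGopel
  decide

lemma gopmem6 : ∀ m ∈ ({v0001, v0010, v1100, v1111} : Finset V4), m = v0001 ∨ m = v0010 ∨ m = v1100 ∨ m = v1111 := by decide

lemma gop7 : IsGopel ({v0001, v0011, v0100, v0110} : Finset V4) := by
  unfold IsGopel
  decide

lemma gopmem7 : ∀ m ∈ ({v0001, v0011, v0100, v0110} : Finset V4), m = v0001 ∨ m = v0011 ∨ m = v0100 ∨ m = v0110 := by decide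

lemma gop8 : IsGopel ({v0001, v0100, v1001, v1100} : Finset V4) := by
  unfold IsGopel
  decide

lemma gopmem8 : ∀ m ∈ ({v0001, v0100, v1001, v1100} : Finset V4), m = v0001 ∨ m = v0100 ∨ m = v1001 ∨ m = v1100 := by decide

lemma gop9 : IsGopel ({v0001, v0110, v1000, v1111} : Finset V4) := by
  unfold IsGopel
  decide

lemma gopmem9 : ∀ m ∈ ({v0001, v0110, v1000, v1111} : Finset V4), m = v0001 ∨ m = v0110 ∨ m = v1000 ∨ m = v1111 := by decide

lemma gop10 : IsGopel ({v0010, v0011, v1000, v1001} : Finset V4) := by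
  unfold IsGopel
  decide

lemma gopmem10 : ∀ m ∈ ({v0010, v0011, v1000, v1001} : Finset V4), m = v0010 ∨ m = v0011 ∨ m = v1000 ∨ m = v1001 := by decide

lemma gop11 : IsGopel ({v0010, v0100, v1001, v1111} : Finset V4) := by
  unfold IsGopel
  decide

lemma gopmem11 : ∀ m ∈ ({v0010, v0100, v1001, v1111} : Finset V4), m = v0010 ∨ m = v0100 ∨ m = v1001 ∨ m = v1111 := by decide

lemma gop12 : IsGopel ({v0010, v0110, v1000, v1100} : Finset V4) := by
  unfold IsGopel
  decide

lemma gopmem12 : ∀ m ∈ ({v0010, v0110, v1000, v1100} : Finset V4), m = v0010 ∨ m = v0110 ∨ m = v1000 ∨ m = v1100 := by decide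

lemma gop13 : IsGopel ({v0011, v0100, v1000, v1111} : Finset V4) := by
  unfold IsGopel
  decide

lemma gopmem13 : ∀ m ∈ ({v0011, v0100, v1000, v1111} : Finset V4), m = v0011 ∨ m = v0100 ∨ m = v1000 ∨ m = v1111 := by decide

lemma gop14 : IsGopel ({v0011, v0110, v1001, v1100} : Finset V4) := by
  unfold IsGopel
  decide

lemma gopmem14 : ∀ m ∈ ({v0011, v0110, v1001, v1100} : Finset V4), m = v0011 ∨ m = v0110 ∨ m = v1001 ∨ m = v1100 := by decide

set_option maxRecDepth 100000 in
set_option maxHeartbeats 4000000 in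
set_option synthInstance.maxHeartbeats 2000000 in
set_option synthInstance.maxSize 1000000 in
lemma coreLemma : ∀ b0 b1 b2 b3 b4 b5 b6 b7 b8 b9 : Bool,
    (b0 = false ∨ b1 = false ∨ b2 = false ∨ b3 = false ∨ b4 = false ∨ b5 = false ∨ b6 = false ∨ b7 = false ∨ b8 = false ∨ b9 = false) →
    ((b2 = true → b6 = true → b9 = true → b0 = true) ∧
      (b0 = true → b6 = true → b9 = true → b2 = true) ∧
      (b0 = true → b2 = true → b9 = true → b6 = true) ∧
      (b0 = true → b2 = true → b6 = true → b9 = true) ∧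
      (b1 = true → b5 = true → b8 = true → b0 = true) ∧
      (b0 = true → b5 = true → b8 = true → b1 = true) ∧
      (b0 = true → b1 = true → b8 = true → b5 = true) ∧
      (b0 = true → b1 = true → b5 = true → b8 = true) ∧
      (b3 = true → b6 = true → b8 = true → b1 = true) ∧
      (b1 = true → b6 = true → b8 = true → b3 = true) ∧
      (b1 = true → b3 = true → b8 = true → b6 = true) ∧
      (b1 = true → b3 = true → b6 = true → b8 = true) ∧
      (b2 = true → b5 = true → b7 = true → b1 = true) ∧
      (b1 = true → b5 = true → b7 = true → b2 = true) ∧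
      (b1 = true → b2 = true → b7 = true → b5 = true) ∧
      (b1 = true → b2 = true → b5 = true → b7 = true) ∧
      (b3 = true → b5 = true → b9 = true → b2 = true) ∧
      (b2 = true → b5 = true → b9 = true → b3 = true) ∧
      (b2 = true → b3 = true → b9 = true → b5 = true) ∧
      (b2 = true → b3 = true → b5 = true → b9 = true) ∧
      (b3 = true → b4 = true → b8 = true → b2 = true) ∧
      (b2 = true → b4 = true → b8 = true → b3 = true) ∧
      (b2 = true → b3 = true → b8 = true → b4 = true) ∧
      (b2 = true → b3 = true → b4 = true → b8 = true) ∧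
      (b5 = true → b6 = true → b7 = true → b4 = true) ∧
      (b4 = true → b6 = true → b7 = true → b5 = true) ∧
      (b4 = true → b5 = true → b7 = true → b6 = true) ∧
      (b4 = true → b5 = true → b6 = true → b7 = true) ∧
      (b7 = true → b8 = true → b9 = true → b6 = true) ∧
      (b6 = true → b8 = true → b9 = true → b7 = true) ∧
      (b6 = true → b7 = true → b9 = true → b8 = true) ∧
      (b6 = true → b7 = true → b8 = true → b9 = true)) →
    (((if b0 = true then (1:ℕ) else 0) + ((if b1 = true then (1:ℕ) else 0) + ((if b2 = true then (1:ℕ) else 0) + ((if b3 = true then (1:ℕ) else 0) + ((if b4 = true then (1:ℕ) else 0) + ((if b5 = true then (1:ℕ) else 0) + ((if b6 = true then (1:ℕ) else 0) + ((if b7 = true then (1:ℕ) else 0) + ((if b8 = true then (1:ℕ) else 0) + (if b9 = true then (1:ℕ) else 0)))))))))) ≤ 4 ∨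
      ((b0 = false ∧ b1 = false ∧ b2 = false ∧ b3 = false) ∨
      (b0 = false ∧ b1 = false ∧ b6 = false ∧ b7 = false) ∨
      (b0 = false ∧ b2 = false ∧ b4 = false ∧ b5 = false) ∨
      (b0 = false ∧ b3 = false ∧ b8 = false ∧ b9 = false) ∨
      (b0 = false ∧ b4 = false ∧ b6 = false ∧ b8 = false) ∨
      (b0 = false ∧ b5 = false ∧ b7 = false ∧ b9 = false) ∨
      (b1 = false ∧ b2 = false ∧ b8 = false ∧ b9 = false) ∨
      (b1 = false ∧ b3 = false ∧ b4 = false ∧ b5 = false) ∨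
      (b1 = false ∧ b4 = false ∧ b7 = false ∧ b8 = false) ∨
      (b1 = false ∧ b5 = false ∧ b6 = false ∧ b9 = false) ∨
      (b2 = false ∧ b3 = false ∧ b6 = false ∧ b7 = false) ∨
      (b2 = false ∧ b4 = false ∧ b7 = false ∧ b9 = false) ∨
      (b2 = false ∧ b5 = false ∧ b6 = false ∧ b8 = false) ∨
      (b3 = false ∧ b4 = false ∧ b6 = false ∧ b9 = false) ∨
      (b3 = false ∧ b5 = false ∧ b7 = false ∧ b8 = false))) := by decide

/-- nonarchimedean small-coordinate estimate for points of `A₂(2)ˢ`. -/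
theorem small_coordinates_nonarch {K : Type*} [Field K] [NumberField K]
    (v : K → ℝ) (hv : IsNonarchAbsValue v)
    (x : V4 → K) (hx : IsA22Point x) (hnz : ∃ m ∈ Echar, x m ≠ 0) :
    ({m | m ∈ Echar ∧ v (x m) < Echar.sup' Echar_nonempty (fun m' => v (x m'))} :
        Set V4).ncard ≤ 4 ∨
    ∃ Q : Finset V4, IsGopel Q ∧
      ({m | m ∈ Echar ∧ v (x m) < Echar.sup' Echar_nonempty (fun m' => v (x m'))} :
        Set V4) ⊆ ↑(Echar \ Q) := by
  classical
  obtain ⟨h1, h2, h3, h4, h5, hq⟩ := hx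
  set M := Echar.sup' Echar_nonempty (fun m' => v (x m')) with hMdef
  set B0 : Bool := decide (v (x v0000) < M) with hB0
  set B1 : Bool := decide (v (x v0001) < M) with hB1
  set B2 : Bool := decide (v (x v0010) < M) with hB2
  set B3 : Bool := decide (v (x v0011) < M) with hB3
  set B4 : Bool := decide (v (x v0100) < M) with hB4
  set B5 : Bool := decide (v (x v0110) < M) with hB5
  set B6 : Bool := decide (v (x v1000) < M) with hB6
  set B7 : Bool := decide (v (x v1001) < M) with hB7
  set B8 : Bool := decide (v (x v1100) < M) with hB8
  set B9 : Bool := decide (v (x v1111) < M) with hB9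
  have hb0 : B0 = true ↔ v (x v0000) < M := by rw [hB0, decide_eq_true_eq]
  have hb1 : B1 = true ↔ v (x v0001) < M := by rw [hB1, decide_eq_true_eq]
  have hb2 : B2 = true ↔ v (x v0010) < M := by rw [hB2, decide_eq_true_eq]
  have hb3 : B3 = true ↔ v (x v0011) < M := by rw [hB3, decide_eq_true_eq]
  have hb4 : B4 = true ↔ v (x v0100) < M := by rw [hB4, decide_eq_true_eq]
  have hb5 : B5 = true ↔ v (x v0110) < M := by rw [hB5, decide_eq_true_eq]
  have hb6 : B6 = true ↔ v (x v1000) < M := by rw [hB6, decide_eq_true_eq]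
  have hb7 : B7 = true ↔ v (x v1001) < M := by rw [hB7, decide_eq_true_eq]
  have hb8 : B8 = true ↔ v (x v1100) < M := by rw [hB8, decide_eq_true_eq]
  have hb9 : B9 = true ↔ v (x v1111) < M := by rw [hB9, decide_eq_true_eq]
  have hne : B0 = false ∨ B1 = false ∨ B2 = false ∨ B3 = false ∨ B4 = false ∨ B5 = false ∨ B6 = false ∨ B7 = false ∨ B8 = false ∨ B9 = false := by
    obtain ⟨m0, hm0E, hm0⟩ := Finset.exists_mem_eq_sup' Echar_nonempty (fun m' => v (x m'))
    rcases Echar_cases m0 hm0E with rfl | rfl | rfl | rfl | rfl | rfl | rfl | rfl | rfl | rfl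
    · exact Or.inl (by rw [hB0]; exact decide_eq_false (not_lt.mpr (le_of_eq (hMdef.trans hm0))))
    · exact Or.inr (Or.inl (by rw [hB1]; exact decide_eq_false (not_lt.mpr (le_of_eq (hMdef.trans hm0)))))
    · exact Or.inr (Or.inr (Or.inl (by rw [hB2]; exact decide_eq_false (not_lt.mpr (le_of_eq (hMdef.trans hm0))))))
    · exact Or.inr (Or.inr (Or.inr (Or.inl (by rw [hB3]; exact decide_eq_false (not_lt.mpr (le_of_eq (hMdef.trans hm0)))))))
    · exact Or.inr (Or.inr (Or.inr (Or.inr (Or.inl (by rw [hB4]; exact decide_eq_false (not_lt.mpr (le_of_eq (hMdef.trans hm0))))))))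
    · exact Or.inr (Or.inr (Or.inr (Or.inr (Or.inr (Or.inl (by rw [hB5]; exact decide_eq_false (not_lt.mpr (le_of_eq (hMdef.trans hm0)))))))))
    · exact Or.inr (Or.inr (Or.inr (Or.inr (Or.inr (Or.inr (Or.inl (by rw [hB6]; exact decide_eq_false (not_lt.mpr (le_of_eq (hMdef.trans hm0))))))))))
    · exact Or.inr (Or.inr (Or.inr (Or.inr (Or.inr (Or.inr (Or.inr (Or.inl (by rw [hB7]; exact decide_eq_false (not_lt.mpr (le_of_eq (hMdef.trans hm0)))))))))))
    · exact Or.inr (Or.inr (Or.inr (Or.inr (Or.inr (Or.inr (Or.inr (Or.inr (Or.inl (by rw [hB8]; exact decide_eq_false (not_lt.mpr (le_of_eq (hMdef.trans hm0))))))))))))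
    · exact Or.inr (Or.inr (Or.inr (Or.inr (Or.inr (Or.inr (Or.inr (Or.inr (Or.inr (by rw [hB9]; exact decide_eq_false (not_lt.mpr (le_of_eq (hMdef.trans hm0))))))))))))
  have hcore := coreLemma B0 B1 B2 B3 B4 B5 B6 B7 B8 B9 hne
    ⟨(fun u0 u1 u2 => (hb0).mpr (step hv (show x v0000 = x v0010 + x v1000 + x v1111 by linear_combination -(1/2) * h1 + (1/2) * h2 + (1/2) * h3 - (1/2) * h4 + (1/2) * h5) ((hb2).mp u0) ((hb6).mp u1) ((hb9).mp u2))),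
      (fun u0 u1 u2 => (hb2).mpr (step hv (show x v0010 = x v0000 + -(x v1000) + -(x v1111) by linear_combination (1/2) * h1 - (1/2) * h2 - (1/2) * h3 + (1/2) * h4 - (1/2) * h5) ((hb0).mp u0) (by rw [vneg hv]; exact (hb6).mp u1) (by rw [vneg hv]; exact (hb9).mp u2))),
      (fun u0 u1 u2 => (hb6).mpr (step hv (show x v1000 = x v0000 + -(x v0010) + -(x v1111) by linear_combination (1/2) * h1 - (1/2) * h2 - (1/2) * h3 + (1/2) * h4 - (1/2) * h5) ((hb0).mp u0) (by rw [vneg hv]; exact (hb2).mp u1) (by rw [vneg hv]; exact (hb9).mp u2))),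
      (fun u0 u1 u2 => (hb9).mpr (step hv (show x v1111 = x v0000 + -(x v0010) + -(x v1000) by linear_combination (1/2) * h1 - (1/2) * h2 - (1/2) * h3 + (1/2) * h4 - (1/2) * h5) ((hb0).mp u0) (by rw [vneg hv]; exact (hb2).mp u1) (by rw [vneg hv]; exact (hb6).mp u2))),
      (fun u0 u1 u2 => (hb0).mpr (step hv (show x v0000 = x v0001 + x v0110 + x v1100 by linear_combination 1 * h2) ((hb1).mp u0) ((hb5).mp u1) ((hb8).mp u2))),
      (fun u0 u1 u2 => (hb1).mpr (step hv (show x v0001 = x v0000 + -(x v0110) + -(x v1100) by linear_combination -1 * h2) ((hb0).mp u0) (by rw [vneg hv]; exact (hb5).mp u1) (by rw [vneg hv]; exact (hb8).mp u2))),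
      (fun u0 u1 u2 => (hb5).mpr (step hv (show x v0110 = x v0000 + -(x v0001) + -(x v1100) by linear_combination -1 * h2) ((hb0).mp u0) (by rw [vneg hv]; exact (hb1).mp u1) (by rw [vneg hv]; exact (hb8).mp u2))),
      (fun u0 u1 u2 => (hb8).mpr (step hv (show x v1100 = x v0000 + -(x v0001) + -(x v0110) by linear_combination -1 * h2) ((hb0).mp u0) (by rw [vneg hv]; exact (hb1).mp u1) (by rw [vneg hv]; exact (hb5).mp u2))),
      (fun u0 u1 u2 => (hb1).mpr (step hv (show x v0001 = x v0011 + x v1000 + -(x v1100) by linear_combination -(1/2) * h1 - (1/2) * h2 - (1/2) * h3 - (1/2) * h4 + (1/2) * h5) ((hb3).mp u0) ((hb6).mp u1) (by rw [vneg hv]; exact (hb8).mp u2))),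
      (fun u0 u1 u2 => (hb3).mpr (step hv (show x v0011 = x v0001 + -(x v1000) + x v1100 by linear_combination (1/2) * h1 + (1/2) * h2 + (1/2) * h3 + (1/2) * h4 - (1/2) * h5) ((hb1).mp u0) (by rw [vneg hv]; exact (hb6).mp u1) ((hb8).mp u2))),
      (fun u0 u1 u2 => (hb6).mpr (step hv (show x v1000 = x v0001 + -(x v0011) + x v1100 by linear_combination (1/2) * h1 + (1/2) * h2 + (1/2) * h3 + (1/2) * h4 - (1/2) * h5) ((hb1).mp u0) (by rw [vneg hv]; exact (hb3).mp u1) ((hb8).mp u2))),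
      (fun u0 u1 u2 => (hb8).mpr (step hv (show x v1100 = -(x v0001) + x v0011 + x v1000 by linear_combination -(1/2) * h1 - (1/2) * h2 - (1/2) * h3 - (1/2) * h4 + (1/2) * h5) (by rw [vneg hv]; exact (hb1).mp u0) ((hb3).mp u1) ((hb6).mp u2))),
      (fun u0 u1 u2 => (hb1).mpr (step hv (show x v0001 = x v0010 + -(x v0110) + x v1001 by linear_combination (1/2) * h1 - (1/2) * h2 + (1/2) * h3 - (1/2) * h4 + (1/2) * h5) ((hb2).mp u0) (by rw [vneg hv]; exact (hb5).mp u1) ((hb7).mp u2))),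
      (fun u0 u1 u2 => (hb2).mpr (step hv (show x v0010 = x v0001 + x v0110 + -(x v1001) by linear_combination -(1/2) * h1 + (1/2) * h2 - (1/2) * h3 + (1/2) * h4 - (1/2) * h5) ((hb1).mp u0) ((hb5).mp u1) (by rw [vneg hv]; exact (hb7).mp u2))),
      (fun u0 u1 u2 => (hb5).mpr (step hv (show x v0110 = -(x v0001) + x v0010 + x v1001 by linear_combination (1/2) * h1 - (1/2) * h2 + (1/2) * h3 - (1/2) * h4 + (1/2) * h5) (by rw [vneg hv]; exact (hb1).mp u0) ((hb2).mp u1) ((hb7).mp u2))),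
      (fun u0 u1 u2 => (hb7).mpr (step hv (show x v1001 = x v0001 + -(x v0010) + x v0110 by linear_combination -(1/2) * h1 + (1/2) * h2 - (1/2) * h3 + (1/2) * h4 - (1/2) * h5) ((hb1).mp u0) (by rw [vneg hv]; exact (hb2).mp u1) ((hb5).mp u2))),
      (fun u0 u1 u2 => (hb2).mpr (step hv (show x v0010 = x v0011 + x v0110 + -(x v1111) by linear_combination -1 * h3) ((hb3).mp u0) ((hb5).mp u1) (by rw [vneg hv]; exact (hb9).mp u2))),
      (fun u0 u1 u2 => (hb3).mpr (step hv (show x v0011 = x v0010 + -(x v0110) + x v1111 by linear_combination 1 * h3) ((hb2).mp u0) (by rw [vneg hv]; exact (hb5).mp u1) ((hb9).mp u2))),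
      (fun u0 u1 u2 => (hb5).mpr (step hv (show x v0110 = x v0010 + -(x v0011) + x v1111 by linear_combination 1 * h3) ((hb2).mp u0) (by rw [vneg hv]; exact (hb3).mp u1) ((hb9).mp u2))),
      (fun u0 u1 u2 => (hb9).mpr (step hv (show x v1111 = -(x v0010) + x v0011 + x v0110 by linear_combination -1 * h3) (by rw [vneg hv]; exact (hb2).mp u0) ((hb3).mp u1) ((hb5).mp u2))),
      (fun u0 u1 u2 => (hb2).mpr (step hv (show x v0010 = x v0011 + x v0100 + -(x v1100) by linear_combination -(1/2) * h1 - (1/2) * h2 - (1/2) * h3 - (1/2) * h4 - (1/2) * h5) ((hb3).mp u0) ((hb4).mp u1) (by rw [vneg hv]; exact (hb8).mp u2))),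
      (fun u0 u1 u2 => (hb3).mpr (step hv (show x v0011 = x v0010 + -(x v0100) + x v1100 by linear_combination (1/2) * h1 + (1/2) * h2 + (1/2) * h3 + (1/2) * h4 + (1/2) * h5) ((hb2).mp u0) (by rw [vneg hv]; exact (hb4).mp u1) ((hb8).mp u2))),
      (fun u0 u1 u2 => (hb4).mpr (step hv (show x v0100 = x v0010 + -(x v0011) + x v1100 by linear_combination (1/2) * h1 + (1/2) * h2 + (1/2) * h3 + (1/2) * h4 + (1/2) * h5) ((hb2).mp u0) (by rw [vneg hv]; exact (hb3).mp u1) ((hb8).mp u2))),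
      (fun u0 u1 u2 => (hb8).mpr (step hv (show x v1100 = -(x v0010) + x v0011 + x v0100 by linear_combination -(1/2) * h1 - (1/2) * h2 - (1/2) * h3 - (1/2) * h4 - (1/2) * h5) (by rw [vneg hv]; exact (hb2).mp u0) ((hb3).mp u1) ((hb4).mp u2))),
      (fun u0 u1 u2 => (hb4).mpr (step hv (show x v0100 = x v0110 + x v1000 + -(x v1001) by linear_combination -(1/2) * h1 + (1/2) * h2 - (1/2) * h3 + (1/2) * h4 + (1/2) * h5) ((hb5).mp u0) ((hb6).mp u1) (by rw [vneg hv]; exact (hb7).mp u2))),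
      (fun u0 u1 u2 => (hb5).mpr (step hv (show x v0110 = x v0100 + -(x v1000) + x v1001 by linear_combination (1/2) * h1 - (1/2) * h2 + (1/2) * h3 - (1/2) * h4 - (1/2) * h5) ((hb4).mp u0) (by rw [vneg hv]; exact (hb6).mp u1) ((hb7).mp u2))),
      (fun u0 u1 u2 => (hb6).mpr (step hv (show x v1000 = x v0100 + -(x v0110) + x v1001 by linear_combination (1/2) * h1 - (1/2) * h2 + (1/2) * h3 - (1/2) * h4 - (1/2) * h5) ((hb4).mp u0) (by rw [vneg hv]; exact (hb5).mp u1) ((hb7).mp u2))),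
      (fun u0 u1 u2 => (hb7).mpr (step hv (show x v1001 = -(x v0100) + x v0110 + x v1000 by linear_combination -(1/2) * h1 + (1/2) * h2 - (1/2) * h3 + (1/2) * h4 + (1/2) * h5) (by rw [vneg hv]; exact (hb4).mp u0) ((hb5).mp u1) ((hb6).mp u2))),
      (fun u0 u1 u2 => (hb6).mpr (step hv (show x v1000 = x v1001 + x v1100 + -(x v1111) by linear_combination 1 * h1) ((hb7).mp u0) ((hb8).mp u1) (by rw [vneg hv]; exact (hb9).mp u2))),
      (fun u0 u1 u2 => (hb7).mpr (step hv (show x v1001 = x v1000 + -(x v1100) + x v1111 by linear_combination -1 * h1) ((hb6).mp u0) (by rw [vneg hv]; exact (hb8).mp u1) ((hb9).mp u2))),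
      (fun u0 u1 u2 => (hb8).mpr (step hv (show x v1100 = x v1000 + -(x v1001) + x v1111 by linear_combination -1 * h1) ((hb6).mp u0) (by rw [vneg hv]; exact (hb7).mp u1) ((hb9).mp u2))),
      (fun u0 u1 u2 => (hb9).mpr (step hv (show x v1111 = -(x v1000) + x v1001 + x v1100 by linear_combination 1 * h1) (by rw [vneg hv]; exact (hb6).mp u0) ((hb7).mp u1) ((hb8).mp u2)))⟩
  rcases hcore with hcnt | (hg | hg | hg | hg | hg | hg | hg | hg | hg | hg | hg | hg | hg | hg | hg)
  · left
    have hSF : ({m | m ∈ Echar ∧ v (x m) < M} : Set V4) =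
        ↑(Echar.filter (fun m => v (x m) < M)) := by
      ext m
      simp [Finset.mem_filter]
    have c0 : (if v (x v0000) < M then (1:ℕ) else 0) = (if B0 = true then (1:ℕ) else 0) := by
      by_cases h : v (x v0000) < M
      · rw [if_pos h, if_pos ((hb0).mpr h)]
      · rw [if_neg h, if_neg (fun hh => h ((hb0).mp hh))]
    have c1 : (if v (x v0001) < M then (1:ℕ) else 0) = (if B1 = true then (1:ℕ) else 0) := by
      by_cases h : v (x v0001) < M
      · rw [if_pos h, if_pos ((hb1).mpr h)]
      · rw [if_neg h, if_neg (fun hh => h ((hb1).mp hh))]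
    have c2 : (if v (x v0010) < M then (1:ℕ) else 0) = (if B2 = true then (1:ℕ) else 0) := by
      by_cases h : v (x v0010) < M
      · rw [if_pos h, if_pos ((hb2).mpr h)]
      · rw [if_neg h, if_neg (fun hh => h ((hb2).mp hh))]
    have c3 : (if v (x v0011) < M then (1:ℕ) else 0) = (if B3 = true then (1:ℕ) else 0) := by
      by_cases h : v (x v0011) < M
      · rw [if_pos h, if_pos ((hb3).mpr h)]
      · rw [if_neg h, if_neg (fun hh => h ((hb3).mp hh))]
    have c4 : (if v (x v0100) < M then (1:ℕ) else 0) = (if B4 = true then (1:ℕ) else 0) := by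
      by_cases h : v (x v0100) < M
      · rw [if_pos h, if_pos ((hb4).mpr h)]
      · rw [if_neg h, if_neg (fun hh => h ((hb4).mp hh))]
    have c5 : (if v (x v0110) < M then (1:ℕ) else 0) = (if B5 = true then (1:ℕ) else 0) := by
      by_cases h : v (x v0110) < M
      · rw [if_pos h, if_pos ((hb5).mpr h)]
      · rw [if_neg h, if_neg (fun hh => h ((hb5).mp hh))]
    have c6 : (if v (x v1000) < M then (1:ℕ) else 0) = (if B6 = true then (1:ℕ) else 0) := by
      by_cases h : v (x v1000) < M
      · rw [if_pos h, if_pos ((hb6).mpr h)]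
      · rw [if_neg h, if_neg (fun hh => h ((hb6).mp hh))]
    have c7 : (if v (x v1001) < M then (1:ℕ) else 0) = (if B7 = true then (1:ℕ) else 0) := by
      by_cases h : v (x v1001) < M
      · rw [if_pos h, if_pos ((hb7).mpr h)]
      · rw [if_neg h, if_neg (fun hh => h ((hb7).mp hh))]
    have c8 : (if v (x v1100) < M then (1:ℕ) else 0) = (if B8 = true then (1:ℕ) else 0) := by
      by_cases h : v (x v1100) < M
      · rw [if_pos h, if_pos ((hb8).mpr h)]
      · rw [if_neg h, if_neg (fun hh => h ((hb8).mp hh))]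
    have c9 : (if v (x v1111) < M then (1:ℕ) else 0) = (if B9 = true then (1:ℕ) else 0) := by
      by_cases h : v (x v1111) < M
      · rw [if_pos h, if_pos ((hb9).mpr h)]
      · rw [if_neg h, if_neg (fun hh => h ((hb9).mp hh))]
    rw [hSF, Set.ncard_coe_finset, Finset.card_filter, Echar_eq_lit]
    rw [Finset.sum_insert (by decide), Finset.sum_insert (by decide),
      Finset.sum_insert (by decide), Finset.sum_insert (by decide),
      Finset.sum_insert (by decide), Finset.sum_insert (by decide),
      Finset.sum_insert (by decide), Finset.sum_insert (by decide),
      Finset.sum_insert (by decide), Finset.sum_singleton]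
    rw [c0, c1, c2, c3, c4, c5, c6, c7, c8, c9]
    exact hcnt
  · right
    obtain ⟨f1, f2, f3, f4⟩ := hg
    refine ⟨({v0000, v0001, v0010, v0011} : Finset V4), gop0, ?_⟩
    rintro m ⟨hmE, hmlt⟩
    rw [Finset.coe_sdiff]
    refine ⟨hmE, fun hmQ => ?_⟩
    rcases gopmem0 m hmQ with rfl | rfl | rfl | rfl
    · have hT := (hb0).mpr hmlt
      rw [f1] at hT
      exact absurd hT Bool.false_ne_true
    · have hT := (hb1).mpr hmlt
      rw [f2] at hT
      exact absurd hT Bool.false_ne_true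
    · have hT := (hb2).mpr hmlt
      rw [f3] at hT
      exact absurd hT Bool.false_ne_true
    · have hT := (hb3).mpr hmlt
      rw [f4] at hT
      exact absurd hT Bool.false_ne_true
  · right
    obtain ⟨f1, f2, f3, f4⟩ := hg
    refine ⟨({v0000, v0001, v1000, v1001} : Finset V4), gop1, ?_⟩
    rintro m ⟨hmE, hmlt⟩
    rw [Finset.coe_sdiff]
    refine ⟨hmE, fun hmQ => ?_⟩
    rcases gopmem1 m hmQ with rfl | rfl | rfl | rfl
    · have hT := (hb0).mpr hmlt
      rw [f1] at hT
      exact absurd hT Bool.false_ne_true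
    · have hT := (hb1).mpr hmlt
      rw [f2] at hT
      exact absurd hT Bool.false_ne_true
    · have hT := (hb6).mpr hmlt
      rw [f3] at hT
      exact absurd hT Bool.false_ne_true
    · have hT := (hb7).mpr hmlt
      rw [f4] at hT
      exact absurd hT Bool.false_ne_true
  · right
    obtain ⟨f1, f2, f3, f4⟩ := hg
    refine ⟨({v0000, v0010, v0100, v0110} : Finset V4), gop2, ?_⟩
    rintro m ⟨hmE, hmlt⟩
    rw [Finset.coe_sdiff]
    refine ⟨hmE, fun hmQ => ?_⟩
    rcases gopmem2 m hmQ with rfl | rfl | rfl | rfl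
    · have hT := (hb0).mpr hmlt
      rw [f1] at hT
      exact absurd hT Bool.false_ne_true
    · have hT := (hb2).mpr hmlt
      rw [f2] at hT
      exact absurd hT Bool.false_ne_true
    · have hT := (hb4).mpr hmlt
      rw [f3] at hT
      exact absurd hT Bool.false_ne_true
    · have hT := (hb5).mpr hmlt
      rw [f4] at hT
      exact absurd hT Bool.false_ne_true
  · right
    obtain ⟨f1, f2, f3, f4⟩ := hg
    refine ⟨({v0000, v0011, v1100, v1111} : Finset V4), gop3, ?_⟩
    rintro m ⟨hmE, hmlt⟩
    rw [Finset.coe_sdiff]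
    refine ⟨hmE, fun hmQ => ?_⟩
    rcases gopmem3 m hmQ with rfl | rfl | rfl | rfl
    · have hT := (hb0).mpr hmlt
      rw [f1] at hT
      exact absurd hT Bool.false_ne_true
    · have hT := (hb3).mpr hmlt
      rw [f2] at hT
      exact absurd hT Bool.false_ne_true
    · have hT := (hb8).mpr hmlt
      rw [f3] at hT
      exact absurd hT Bool.false_ne_true
    · have hT := (hb9).mpr hmlt
      rw [f4] at hT
      exact absurd hT Bool.false_ne_true
  · right
    obtain ⟨f1, f2, f3, f4⟩ := hg
    refine ⟨({v0000, v0100, v1000, v1100} : Finset V4), gop4, ?_⟩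
    rintro m ⟨hmE, hmlt⟩
    rw [Finset.coe_sdiff]
    refine ⟨hmE, fun hmQ => ?_⟩
    rcases gopmem4 m hmQ with rfl | rfl | rfl | rfl
    · have hT := (hb0).mpr hmlt
      rw [f1] at hT
      exact absurd hT Bool.false_ne_true
    · have hT := (hb4).mpr hmlt
      rw [f2] at hT
      exact absurd hT Bool.false_ne_true
    · have hT := (hb6).mpr hmlt
      rw [f3] at hT
      exact absurd hT Bool.false_ne_true
    · have hT := (hb8).mpr hmlt
      rw [f4] at hT
      exact absurd hT Bool.false_ne_true
  · right
    obtain ⟨f1, f2, f3, f4⟩ := hg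
    refine ⟨({v0000, v0110, v1001, v1111} : Finset V4), gop5, ?_⟩
    rintro m ⟨hmE, hmlt⟩
    rw [Finset.coe_sdiff]
    refine ⟨hmE, fun hmQ => ?_⟩
    rcases gopmem5 m hmQ with rfl | rfl | rfl | rfl
    · have hT := (hb0).mpr hmlt
      rw [f1] at hT
      exact absurd hT Bool.false_ne_true
    · have hT := (hb5).mpr hmlt
      rw [f2] at hT
      exact absurd hT Bool.false_ne_true
    · have hT := (hb7).mpr hmlt
      rw [f3] at hT
      exact absurd hT Bool.false_ne_true
    · have hT := (hb9).mpr hmlt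
      rw [f4] at hT
      exact absurd hT Bool.false_ne_true
  · right
    obtain ⟨f1, f2, f3, f4⟩ := hg
    refine ⟨({v0001, v0010, v1100, v1111} : Finset V4), gop6, ?_⟩
    rintro m ⟨hmE, hmlt⟩
    rw [Finset.coe_sdiff]
    refine ⟨hmE, fun hmQ => ?_⟩
    rcases gopmem6 m hmQ with rfl | rfl | rfl | rfl
    · have hT := (hb1).mpr hmlt
      rw [f1] at hT
      exact absurd hT Bool.false_ne_true
    · have hT := (hb2).mpr hmlt
      rw [f2] at hT
      exact absurd hT Bool.false_ne_true
    · have hT := (hb8).mpr hmlt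
      rw [f3] at hT
      exact absurd hT Bool.false_ne_true
    · have hT := (hb9).mpr hmlt
      rw [f4] at hT
      exact absurd hT Bool.false_ne_true
  · right
    obtain ⟨f1, f2, f3, f4⟩ := hg
    refine ⟨({v0001, v0011, v0100, v0110} : Finset V4), gop7, ?_⟩
    rintro m ⟨hmE, hmlt⟩
    rw [Finset.coe_sdiff]
    refine ⟨hmE, fun hmQ => ?_⟩
    rcases gopmem7 m hmQ with rfl | rfl | rfl | rfl
    · have hT := (hb1).mpr hmlt
      rw [f1] at hT
      exact absurd hT Bool.false_ne_true
    · have hT := (hb3).mpr hmlt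
      rw [f2] at hT
      exact absurd hT Bool.false_ne_true
    · have hT := (hb4).mpr hmlt
      rw [f3] at hT
      exact absurd hT Bool.false_ne_true
    · have hT := (hb5).mpr hmlt
      rw [f4] at hT
      exact absurd hT Bool.false_ne_true
  · right
    obtain ⟨f1, f2, f3, f4⟩ := hg
    refine ⟨({v0001, v0100, v1001, v1100} : Finset V4), gop8, ?_⟩
    rintro m ⟨hmE, hmlt⟩
    rw [Finset.coe_sdiff]
    refine ⟨hmE, fun hmQ => ?_⟩
    rcases gopmem8 m hmQ with rfl | rfl | rfl | rfl
    · have hT := (hb1).mpr hmlt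
      rw [f1] at hT
      exact absurd hT Bool.false_ne_true
    · have hT := (hb4).mpr hmlt
      rw [f2] at hT
      exact absurd hT Bool.false_ne_true
    · have hT := (hb7).mpr hmlt
      rw [f3] at hT
      exact absurd hT Bool.false_ne_true
    · have hT := (hb8).mpr hmlt
      rw [f4] at hT
      exact absurd hT Bool.false_ne_true
  · right
    obtain ⟨f1, f2, f3, f4⟩ := hg
    refine ⟨({v0001, v0110, v1000, v1111} : Finset V4), gop9, ?_⟩
    rintro m ⟨hmE, hmlt⟩
    rw [Finset.coe_sdiff]
    refine ⟨hmE, fun hmQ => ?_⟩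
    rcases gopmem9 m hmQ with rfl | rfl | rfl | rfl
    · have hT := (hb1).mpr hmlt
      rw [f1] at hT
      exact absurd hT Bool.false_ne_true
    · have hT := (hb5).mpr hmlt
      rw [f2] at hT
      exact absurd hT Bool.false_ne_true
    · have hT := (hb6).mpr hmlt
      rw [f3] at hT
      exact absurd hT Bool.false_ne_true
    · have hT := (hb9).mpr hmlt
      rw [f4] at hT
      exact absurd hT Bool.false_ne_true
  · right
    obtain ⟨f1, f2, f3, f4⟩ := hg
    refine ⟨({v0010, v0011, v1000, v1001} : Finset V4), gop10, ?_⟩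
    rintro m ⟨hmE, hmlt⟩
    rw [Finset.coe_sdiff]
    refine ⟨hmE, fun hmQ => ?_⟩
    rcases gopmem10 m hmQ with rfl | rfl | rfl | rfl
    · have hT := (hb2).mpr hmlt
      rw [f1] at hT
      exact absurd hT Bool.false_ne_true
    · have hT := (hb3).mpr hmlt
      rw [f2] at hT
      exact absurd hT Bool.false_ne_true
    · have hT := (hb6).mpr hmlt
      rw [f3] at hT
      exact absurd hT Bool.false_ne_true
    · have hT := (hb7).mpr hmlt
      rw [f4] at hT
      exact absurd hT Bool.false_ne_true
  · right
    obtain ⟨f1, f2, f3, f4⟩ := hg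
    refine ⟨({v0010, v0100, v1001, v1111} : Finset V4), gop11, ?_⟩
    rintro m ⟨hmE, hmlt⟩
    rw [Finset.coe_sdiff]
    refine ⟨hmE, fun hmQ => ?_⟩
    rcases gopmem11 m hmQ with rfl | rfl | rfl | rfl
    · have hT := (hb2).mpr hmlt
      rw [f1] at hT
      exact absurd hT Bool.false_ne_true
    · have hT := (hb4).mpr hmlt
      rw [f2] at hT
      exact absurd hT Bool.false_ne_true
    · have hT := (hb7).mpr hmlt
      rw [f3] at hT
      exact absurd hT Bool.false_ne_true
    · have hT := (hb9).mpr hmlt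
      rw [f4] at hT
      exact absurd hT Bool.false_ne_true
  · right
    obtain ⟨f1, f2, f3, f4⟩ := hg
    refine ⟨({v0010, v0110, v1000, v1100} : Finset V4), gop12, ?_⟩
    rintro m ⟨hmE, hmlt⟩
    rw [Finset.coe_sdiff]
    refine ⟨hmE, fun hmQ => ?_⟩
    rcases gopmem12 m hmQ with rfl | rfl | rfl | rfl
    · have hT := (hb2).mpr hmlt
      rw [f1] at hT
      exact absurd hT Bool.false_ne_true
    · have hT := (hb5).mpr hmlt
      rw [f2] at hT
      exact absurd hT Bool.false_ne_true
    · have hT := (hb6).mpr hmlt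
      rw [f3] at hT
      exact absurd hT Bool.false_ne_true
    · have hT := (hb8).mpr hmlt
      rw [f4] at hT
      exact absurd hT Bool.false_ne_true
  · right
    obtain ⟨f1, f2, f3, f4⟩ := hg
    refine ⟨({v0011, v0100, v1000, v1111} : Finset V4), gop13, ?_⟩
    rintro m ⟨hmE, hmlt⟩
    rw [Finset.coe_sdiff]
    refine ⟨hmE, fun hmQ => ?_⟩
    rcases gopmem13 m hmQ with rfl | rfl | rfl | rfl
    · have hT := (hb3).mpr hmlt
      rw [f1] at hT
      exact absurd hT Bool.false_ne_true
    · have hT := (hb4).mpr hmlt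
      rw [f2] at hT
      exact absurd hT Bool.false_ne_true
    · have hT := (hb6).mpr hmlt
      rw [f3] at hT
      exact absurd hT Bool.false_ne_true
    · have hT := (hb9).mpr hmlt
      rw [f4] at hT
      exact absurd hT Bool.false_ne_true
  · right
    obtain ⟨f1, f2, f3, f4⟩ := hg
    refine ⟨({v0011, v0110, v1001, v1100} : Finset V4), gop14, ?_⟩
    rintro m ⟨hmE, hmlt⟩
    rw [Finset.coe_sdiff]
    refine ⟨hmE, fun hmQ => ?_⟩
    rcases gopmem14 m hmQ with rfl | rfl | rfl | rfl
    · have hT := (hb3).mpr hmlt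
      rw [f1] at hT
      exact absurd hT Bool.false_ne_true
    · have hT := (hb5).mpr hmlt
      rw [f2] at hT
      exact absurd hT Bool.false_ne_true
    · have hT := (hb7).mpr hmlt
      rw [f3] at hT
      exact absurd hT Bool.false_ne_true
    · have hT := (hb8).mpr hmlt
      rw [f4] at hT
      exact absurd hT Bool.false_ne_true
end

section
/- Let x = (x_m)_{m∈E} be a ℂ-point of A₂(2)ˢ whose coordinates are not all zero, and set M := max_{m'∈E} |x_{m'}| (usual complex absolute value). Then the set {m ∈ E : |x_m| < M/27} either has at most 4 elements or is contained in the complement in E of some Göpel quadruple. -/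
open Matrix BigOperators

def gopels : List (Finset V4) := [
  {v0000, v0001, v0010, v0011},
  {v0000, v0001, v1000, v1001},
  {v0000, v0010, v0100, v0110},
  {v0000, v0011, v1100, v1111},
  {v0000, v0100, v1000, v1100},
  {v0000, v0110, v1001, v1111},
  {v0001, v0010, v1100, v1111},
  {v0001, v0011, v0100, v0110},
  {v0001, v0100, v1001, v1100},
  {v0001, v0110, v1000, v1111},
  {v0010, v0011, v1000, v1001},
  {v0010, v0100, v1001, v1111},
  {v0010, v0110, v1000, v1100},
  {v0011, v0100, v1000, v1111},
  {v0011, v0110, v1001, v1100}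
]

def eV : Fin 10 → V4 := ![v0000, v0001, v0010, v0011, v0100, v0110, v1000, v1001, v1100, v1111]

def stepB (m : Fin 10 → Bool) : Fin 10 → Bool :=
  ![m 0 || (m 2 && m 7 && m 8) || (m 3 && m 5 && m 6) || (m 1 && m 4 && m 9) || (m 2 && m 6 && m 9) || (m 1 && m 5 && m 8) || (m 3 && m 4 && m 7),
    m 1 || (m 3 && m 6 && m 8) || (m 2 && m 5 && m 7) || (m 0 && m 4 && m 9) || (m 3 && m 7 && m 9) || (m 0 && m 5 && m 8) || (m 2 && m 4 && m 6),
    m 2 || (m 3 && m 4 && m 8) || (m 0 && m 7 && m 8) || (m 1 && m 5 && m 7) || (m 0 && m 6 && m 9) || (m 3 && m 5 && m 9) || (m 1 && m 4 && m 6),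
    m 3 || (m 2 && m 4 && m 8) || (m 1 && m 6 && m 8) || (m 0 && m 5 && m 6) || (m 1 && m 7 && m 9) || (m 2 && m 5 && m 9) || (m 0 && m 4 && m 7),
    m 4 || (m 2 && m 3 && m 8) || (m 5 && m 8 && m 9) || (m 5 && m 6 && m 7) || (m 0 && m 1 && m 9) || (m 0 && m 3 && m 7) || (m 1 && m 2 && m 6),
    m 5 || (m 4 && m 8 && m 9) || (m 0 && m 3 && m 6) || (m 1 && m 2 && m 7) || (m 4 && m 6 && m 7) || (m 0 && m 1 && m 8) || (m 2 && m 3 && m 9),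
    m 6 || (m 1 && m 3 && m 8) || (m 7 && m 8 && m 9) || (m 0 && m 3 && m 5) || (m 4 && m 5 && m 7) || (m 0 && m 2 && m 9) || (m 1 && m 2 && m 4),
    m 7 || (m 0 && m 2 && m 8) || (m 6 && m 8 && m 9) || (m 1 && m 2 && m 5) || (m 4 && m 5 && m 6) || (m 1 && m 3 && m 9) || (m 0 && m 3 && m 4),
    m 8 || (m 2 && m 3 && m 4) || (m 1 && m 3 && m 6) || (m 0 && m 2 && m 7) || (m 4 && m 5 && m 9) || (m 6 && m 7 && m 9) || (m 0 && m 1 && m 5),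
    m 9 || (m 4 && m 5 && m 8) || (m 6 && m 7 && m 8) || (m 0 && m 1 && m 4) || (m 0 && m 2 && m 6) || (m 1 && m 3 && m 7) || (m 2 && m 3 && m 5)]

set_option maxRecDepth 10000 in
lemma gopel_sound : ∀ Q ∈ gopels, IsGopel Q := by
  simp only [IsGopel, gopels]; decide

set_option maxRecDepth 40000 in
set_option maxHeartbeats 4000000 in
set_option synthInstance.maxHeartbeats 2000000 in
set_option synthInstance.maxSize 5000 in
lemma combB : ∀ b1 b2 b3 b4 b5 b6 b7 b8 b9 b10 : Bool,
    5 ≤ b1.toNat + (b2.toNat + (b3.toNat + (b4.toNat + (b5.toNat + (b6.toNat + (b7.toNat + (b8.toNat + (b9.toNat + b10.toNat)))))))) →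
    (b1 || b2 || b3 || b4) = true →
    (b1 || b2 || b7 || b8) = true →
    (b1 || b3 || b5 || b6) = true →
    (b1 || b4 || b9 || b10) = true →
    (b1 || b5 || b7 || b9) = true →
    (b1 || b6 || b8 || b10) = true →
    (b2 || b3 || b9 || b10) = true →
    (b2 || b4 || b5 || b6) = true →
    (b2 || b5 || b8 || b9) = true →
    (b2 || b6 || b7 || b10) = true →
    (b3 || b4 || b7 || b8) = true →
    (b3 || b5 || b8 || b10) = true →
    (b3 || b6 || b7 || b9) = true →
    (b4 || b5 || b7 || b10) = true →
    (b4 || b6 || b8 || b9) = true →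
    ∀ i, stepB (stepB (stepB ![b1, b2, b3, b4, b5, b6, b7, b8, b9, b10])) i = true := by decide

lemma tri3_s11 {t : ℝ} {a b c d : ℂ} (h : a = b + c + d) (hb : ‖b‖ < t)
    (hc : ‖c‖ < t) (hd : ‖d‖ < t) : ‖a‖ < 3 * t := by
  have h1 : ‖a‖ ≤ ‖b‖ + ‖c‖ + ‖d‖ := by
    rw [h]
    calc ‖b + c + d‖ ≤ ‖b + c‖ + ‖d‖ :=
          norm_add_le _ _
      _ ≤ ‖b‖ + ‖c‖ + ‖d‖ := by
          have := norm_add_le b c; linarith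
  linarith

set_option maxHeartbeats 4000000 in
lemma stepB_bound (x : V4 → ℂ) (hx : IsA22Point x) {t : ℝ} (ht : 0 < t)
    (mask : Fin 10 → Bool)
    (hmask : ∀ i, mask i = true → ‖x (eV i)‖ < t) :
    ∀ i, stepB mask i = true → ‖x (eV i)‖ < 3 * t := by
  obtain ⟨h1, h2, h3, h4, h5, -⟩ := hx
  intro i hi
  obtain ⟨iv, hlt⟩ := i
  interval_cases iv
  · have hi' : (mask 0 || (mask 2 && mask 7 && mask 8) || (mask 3 && mask 5 && mask 6) || (mask 1 && mask 4 && mask 9) || (mask 2 && mask 6 && mask 9) || (mask 1 && mask 5 && mask 8) || (mask 3 && mask 4 && mask 7)) = true := hi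
    show ‖x v0000‖ < 3 * t
    simp only [Bool.or_eq_true, Bool.and_eq_true] at hi'
    rcases hi' with ((((((hh | ⟨⟨ha0, hb0⟩, hc0⟩) | ⟨⟨ha1, hb1⟩, hc1⟩) | ⟨⟨ha2, hb2⟩, hc2⟩) | ⟨⟨ha3, hb3⟩, hc3⟩) | ⟨⟨ha4, hb4⟩, hc4⟩) | ⟨⟨ha5, hb5⟩, hc5⟩)
    · exact (hmask 0 hh).trans_le (by linarith)
    · exact tri3_s11 (show x v0000 = x v0010 + x v1001 + x v1100 by linear_combination (1/2 : ℂ) * h1 + (1/2 : ℂ) * h2 + (1/2 : ℂ) * h3 - (1/2 : ℂ) * h4 + (1/2 : ℂ) * h5)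
        (hmask 2 ha0) (hmask 7 hb0) (hmask 8 hc0)
    · exact tri3_s11 (show x v0000 = x v0011 + x v0110 + x v1000 by linear_combination -(1/2 : ℂ) * h1 + (1/2 : ℂ) * h2 - (1/2 : ℂ) * h3 - (1/2 : ℂ) * h4 + (1/2 : ℂ) * h5)
        (hmask 3 ha1) (hmask 5 hb1) (hmask 6 hc1)
    · exact tri3_s11 (show x v0000 = x v0001 + x v0100 + x v1111 by linear_combination -(1/2 : ℂ) * h1 + (1/2 : ℂ) * h2 + (1/2 : ℂ) * h3 - (1/2 : ℂ) * h4 - (1/2 : ℂ) * h5)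
        (hmask 1 ha2) (hmask 4 hb2) (hmask 9 hc2)
    · exact tri3_s11 (show x v0000 = x v0010 + x v1000 + x v1111 by linear_combination -(1/2 : ℂ) * h1 + (1/2 : ℂ) * h2 + (1/2 : ℂ) * h3 - (1/2 : ℂ) * h4 + (1/2 : ℂ) * h5)
        (hmask 2 ha3) (hmask 6 hb3) (hmask 9 hc3)
    · exact tri3_s11 (show x v0000 = x v0001 + x v0110 + x v1100 by linear_combination h2)
        (hmask 1 ha4) (hmask 5 hb4) (hmask 8 hc4)
    · exact tri3_s11 (show x v0000 = x v0011 + x v0100 + x v1001 by linear_combination -h4)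
        (hmask 3 ha5) (hmask 4 hb5) (hmask 7 hc5)
  · have hi' : (mask 1 || (mask 3 && mask 6 && mask 8) || (mask 2 && mask 5 && mask 7) || (mask 0 && mask 4 && mask 9) || (mask 3 && mask 7 && mask 9) || (mask 0 && mask 5 && mask 8) || (mask 2 && mask 4 && mask 6)) = true := hi
    show ‖x v0001‖ < 3 * t
    simp only [Bool.or_eq_true, Bool.and_eq_true] at hi'
    rcases hi' with ((((((hh | ⟨⟨ha0, hb0⟩, hc0⟩) | ⟨⟨ha1, hb1⟩, hc1⟩) | ⟨⟨ha2, hb2⟩, hc2⟩) | ⟨⟨ha3, hb3⟩, hc3⟩) | ⟨⟨ha4, hb4⟩, hc4⟩) | ⟨⟨ha5, hb5⟩, hc5⟩)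
    · exact (hmask 1 hh).trans_le (by linarith)
    · exact tri3_s11 (show x v0001 = x v0011 + x v1000 + -(x v1100) by linear_combination -(1/2 : ℂ) * h1 - (1/2 : ℂ) * h2 - (1/2 : ℂ) * h3 - (1/2 : ℂ) * h4 + (1/2 : ℂ) * h5)
        (hmask 3 ha0) (hmask 6 hb0) (by rw [norm_neg]; exact hmask 8 hc0)
    · exact tri3_s11 (show x v0001 = x v0010 + -(x v0110) + x v1001 by linear_combination (1/2 : ℂ) * h1 - (1/2 : ℂ) * h2 + (1/2 : ℂ) * h3 - (1/2 : ℂ) * h4 + (1/2 : ℂ) * h5)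
        (hmask 2 ha1) (by rw [norm_neg]; exact hmask 5 hb1) (hmask 7 hc1)
    · exact tri3_s11 (show x v0001 = x v0000 + -(x v0100) + -(x v1111) by linear_combination (1/2 : ℂ) * h1 - (1/2 : ℂ) * h2 - (1/2 : ℂ) * h3 + (1/2 : ℂ) * h4 + (1/2 : ℂ) * h5)
        (hmask 0 ha2) (by rw [norm_neg]; exact hmask 4 hb2) (by rw [norm_neg]; exact hmask 9 hc2)
    · exact tri3_s11 (show x v0001 = x v0011 + x v1001 + -(x v1111) by linear_combination (1/2 : ℂ) * h1 - (1/2 : ℂ) * h2 - (1/2 : ℂ) * h3 - (1/2 : ℂ) * h4 + (1/2 : ℂ) * h5)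
        (hmask 3 ha3) (hmask 7 hb3) (by rw [norm_neg]; exact hmask 9 hc3)
    · exact tri3_s11 (show x v0001 = x v0000 + -(x v0110) + -(x v1100) by linear_combination -h2)
        (hmask 0 ha4) (by rw [norm_neg]; exact hmask 5 hb4) (by rw [norm_neg]; exact hmask 8 hc4)
    · exact tri3_s11 (show x v0001 = x v0010 + -(x v0100) + x v1000 by linear_combination h5)
        (hmask 2 ha5) (by rw [norm_neg]; exact hmask 4 hb5) (hmask 6 hc5)
  · have hi' : (mask 2 || (mask 3 && mask 4 && mask 8) || (mask 0 && mask 7 && mask 8) || (mask 1 && mask 5 && mask 7) || (mask 0 && mask 6 && mask 9) || (mask 3 && mask 5 && mask 9) || (mask 1 && mask 4 && mask 6)) = true := hi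
    show ‖x v0010‖ < 3 * t
    simp only [Bool.or_eq_true, Bool.and_eq_true] at hi'
    rcases hi' with ((((((hh | ⟨⟨ha0, hb0⟩, hc0⟩) | ⟨⟨ha1, hb1⟩, hc1⟩) | ⟨⟨ha2, hb2⟩, hc2⟩) | ⟨⟨ha3, hb3⟩, hc3⟩) | ⟨⟨ha4, hb4⟩, hc4⟩) | ⟨⟨ha5, hb5⟩, hc5⟩)
    · exact (hmask 2 hh).trans_le (by linarith)
    · exact tri3_s11 (show x v0010 = x v0011 + x v0100 + -(x v1100) by linear_combination -(1/2 : ℂ) * h1 - (1/2 : ℂ) * h2 - (1/2 : ℂ) * h3 - (1/2 : ℂ) * h4 - (1/2 : ℂ) * h5)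
        (hmask 3 ha0) (hmask 4 hb0) (by rw [norm_neg]; exact hmask 8 hc0)
    · exact tri3_s11 (show x v0010 = x v0000 + -(x v1001) + -(x v1100) by linear_combination -(1/2 : ℂ) * h1 - (1/2 : ℂ) * h2 - (1/2 : ℂ) * h3 + (1/2 : ℂ) * h4 - (1/2 : ℂ) * h5)
        (hmask 0 ha1) (by rw [norm_neg]; exact hmask 7 hb1) (by rw [norm_neg]; exact hmask 8 hc1)
    · exact tri3_s11 (show x v0010 = x v0001 + x v0110 + -(x v1001) by linear_combination -(1/2 : ℂ) * h1 + (1/2 : ℂ) * h2 - (1/2 : ℂ) * h3 + (1/2 : ℂ) * h4 - (1/2 : ℂ) * h5)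
        (hmask 1 ha2) (hmask 5 hb2) (by rw [norm_neg]; exact hmask 7 hc2)
    · exact tri3_s11 (show x v0010 = x v0000 + -(x v1000) + -(x v1111) by linear_combination (1/2 : ℂ) * h1 - (1/2 : ℂ) * h2 - (1/2 : ℂ) * h3 + (1/2 : ℂ) * h4 - (1/2 : ℂ) * h5)
        (hmask 0 ha3) (by rw [norm_neg]; exact hmask 6 hb3) (by rw [norm_neg]; exact hmask 9 hc3)
    · exact tri3_s11 (show x v0010 = x v0011 + x v0110 + -(x v1111) by linear_combination -h3)
        (hmask 3 ha4) (hmask 5 hb4) (by rw [norm_neg]; exact hmask 9 hc4)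
    · exact tri3_s11 (show x v0010 = x v0001 + x v0100 + -(x v1000) by linear_combination -h5)
        (hmask 1 ha5) (hmask 4 hb5) (by rw [norm_neg]; exact hmask 6 hc5)
  · have hi' : (mask 3 || (mask 2 && mask 4 && mask 8) || (mask 1 && mask 6 && mask 8) || (mask 0 && mask 5 && mask 6) || (mask 1 && mask 7 && mask 9) || (mask 2 && mask 5 && mask 9) || (mask 0 && mask 4 && mask 7)) = true := hi
    show ‖x v0011‖ < 3 * t
    simp only [Bool.or_eq_true, Bool.and_eq_true] at hi'
    rcases hi' with ((((((hh | ⟨⟨ha0, hb0⟩, hc0⟩) | ⟨⟨ha1, hb1⟩, hc1⟩) | ⟨⟨ha2, hb2⟩, hc2⟩) | ⟨⟨ha3, hb3⟩, hc3⟩) | ⟨⟨ha4, hb4⟩, hc4⟩) | ⟨⟨ha5, hb5⟩, hc5⟩)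
    · exact (hmask 3 hh).trans_le (by linarith)
    · exact tri3_s11 (show x v0011 = x v0010 + -(x v0100) + x v1100 by linear_combination (1/2 : ℂ) * h1 + (1/2 : ℂ) * h2 + (1/2 : ℂ) * h3 + (1/2 : ℂ) * h4 + (1/2 : ℂ) * h5)
        (hmask 2 ha0) (by rw [norm_neg]; exact hmask 4 hb0) (hmask 8 hc0)
    · exact tri3_s11 (show x v0011 = x v0001 + -(x v1000) + x v1100 by linear_combination (1/2 : ℂ) * h1 + (1/2 : ℂ) * h2 + (1/2 : ℂ) * h3 + (1/2 : ℂ) * h4 - (1/2 : ℂ) * h5)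
        (hmask 1 ha1) (by rw [norm_neg]; exact hmask 6 hb1) (hmask 8 hc1)
    · exact tri3_s11 (show x v0011 = x v0000 + -(x v0110) + -(x v1000) by linear_combination (1/2 : ℂ) * h1 - (1/2 : ℂ) * h2 + (1/2 : ℂ) * h3 + (1/2 : ℂ) * h4 - (1/2 : ℂ) * h5)
        (hmask 0 ha2) (by rw [norm_neg]; exact hmask 5 hb2) (by rw [norm_neg]; exact hmask 6 hc2)
    · exact tri3_s11 (show x v0011 = x v0001 + -(x v1001) + x v1111 by linear_combination -(1/2 : ℂ) * h1 + (1/2 : ℂ) * h2 + (1/2 : ℂ) * h3 + (1/2 : ℂ) * h4 - (1/2 : ℂ) * h5)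
        (hmask 1 ha3) (by rw [norm_neg]; exact hmask 7 hb3) (hmask 9 hc3)
    · exact tri3_s11 (show x v0011 = x v0010 + -(x v0110) + x v1111 by linear_combination h3)
        (hmask 2 ha4) (by rw [norm_neg]; exact hmask 5 hb4) (hmask 9 hc4)
    · exact tri3_s11 (show x v0011 = x v0000 + -(x v0100) + -(x v1001) by linear_combination h4)
        (hmask 0 ha5) (by rw [norm_neg]; exact hmask 4 hb5) (by rw [norm_neg]; exact hmask 7 hc5)
  · have hi' : (mask 4 || (mask 2 && mask 3 && mask 8) || (mask 5 && mask 8 && mask 9) || (mask 5 && mask 6 && mask 7) || (mask 0 && mask 1 && mask 9) || (mask 0 && mask 3 && mask 7) || (mask 1 && mask 2 && mask 6)) = true := hi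
    show ‖x v0100‖ < 3 * t
    simp only [Bool.or_eq_true, Bool.and_eq_true] at hi'
    rcases hi' with ((((((hh | ⟨⟨ha0, hb0⟩, hc0⟩) | ⟨⟨ha1, hb1⟩, hc1⟩) | ⟨⟨ha2, hb2⟩, hc2⟩) | ⟨⟨ha3, hb3⟩, hc3⟩) | ⟨⟨ha4, hb4⟩, hc4⟩) | ⟨⟨ha5, hb5⟩, hc5⟩)
    · exact (hmask 4 hh).trans_le (by linarith)
    · exact tri3_s11 (show x v0100 = x v0010 + -(x v0011) + x v1100 by linear_combination (1/2 : ℂ) * h1 + (1/2 : ℂ) * h2 + (1/2 : ℂ) * h3 + (1/2 : ℂ) * h4 + (1/2 : ℂ) * h5)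
        (hmask 2 ha0) (by rw [norm_neg]; exact hmask 3 hb0) (hmask 8 hc0)
    · exact tri3_s11 (show x v0100 = x v0110 + x v1100 + -(x v1111) by linear_combination (1/2 : ℂ) * h1 + (1/2 : ℂ) * h2 - (1/2 : ℂ) * h3 + (1/2 : ℂ) * h4 + (1/2 : ℂ) * h5)
        (hmask 5 ha1) (hmask 8 hb1) (by rw [norm_neg]; exact hmask 9 hc1)
    · exact tri3_s11 (show x v0100 = x v0110 + x v1000 + -(x v1001) by linear_combination -(1/2 : ℂ) * h1 + (1/2 : ℂ) * h2 - (1/2 : ℂ) * h3 + (1/2 : ℂ) * h4 + (1/2 : ℂ) * h5)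
        (hmask 5 ha2) (hmask 6 hb2) (by rw [norm_neg]; exact hmask 7 hc2)
    · exact tri3_s11 (show x v0100 = x v0000 + -(x v0001) + -(x v1111) by linear_combination (1/2 : ℂ) * h1 - (1/2 : ℂ) * h2 - (1/2 : ℂ) * h3 + (1/2 : ℂ) * h4 + (1/2 : ℂ) * h5)
        (hmask 0 ha3) (by rw [norm_neg]; exact hmask 1 hb3) (by rw [norm_neg]; exact hmask 9 hc3)
    · exact tri3_s11 (show x v0100 = x v0000 + -(x v0011) + -(x v1001) by linear_combination h4)
        (hmask 0 ha4) (by rw [norm_neg]; exact hmask 3 hb4) (by rw [norm_neg]; exact hmask 7 hc4)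
    · exact tri3_s11 (show x v0100 = -(x v0001) + x v0010 + x v1000 by linear_combination h5)
        (by rw [norm_neg]; exact hmask 1 ha5) (hmask 2 hb5) (hmask 6 hc5)
  · have hi' : (mask 5 || (mask 4 && mask 8 && mask 9) || (mask 0 && mask 3 && mask 6) || (mask 1 && mask 2 && mask 7) || (mask 4 && mask 6 && mask 7) || (mask 0 && mask 1 && mask 8) || (mask 2 && mask 3 && mask 9)) = true := hi
    show ‖x v0110‖ < 3 * t
    simp only [Bool.or_eq_true, Bool.and_eq_true] at hi'
    rcases hi' with ((((((hh | ⟨⟨ha0, hb0⟩, hc0⟩) | ⟨⟨ha1, hb1⟩, hc1⟩) | ⟨⟨ha2, hb2⟩, hc2⟩) | ⟨⟨ha3, hb3⟩, hc3⟩) | ⟨⟨ha4, hb4⟩, hc4⟩) | ⟨⟨ha5, hb5⟩, hc5⟩)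
    · exact (hmask 5 hh).trans_le (by linarith)
    · exact tri3_s11 (show x v0110 = x v0100 + -(x v1100) + x v1111 by linear_combination -(1/2 : ℂ) * h1 - (1/2 : ℂ) * h2 + (1/2 : ℂ) * h3 - (1/2 : ℂ) * h4 - (1/2 : ℂ) * h5)
        (hmask 4 ha0) (by rw [norm_neg]; exact hmask 8 hb0) (hmask 9 hc0)
    · exact tri3_s11 (show x v0110 = x v0000 + -(x v0011) + -(x v1000) by linear_combination (1/2 : ℂ) * h1 - (1/2 : ℂ) * h2 + (1/2 : ℂ) * h3 + (1/2 : ℂ) * h4 - (1/2 : ℂ) * h5)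
        (hmask 0 ha1) (by rw [norm_neg]; exact hmask 3 hb1) (by rw [norm_neg]; exact hmask 6 hc1)
    · exact tri3_s11 (show x v0110 = -(x v0001) + x v0010 + x v1001 by linear_combination (1/2 : ℂ) * h1 - (1/2 : ℂ) * h2 + (1/2 : ℂ) * h3 - (1/2 : ℂ) * h4 + (1/2 : ℂ) * h5)
        (by rw [norm_neg]; exact hmask 1 ha2) (hmask 2 hb2) (hmask 7 hc2)
    · exact tri3_s11 (show x v0110 = x v0100 + -(x v1000) + x v1001 by linear_combination (1/2 : ℂ) * h1 - (1/2 : ℂ) * h2 + (1/2 : ℂ) * h3 - (1/2 : ℂ) * h4 - (1/2 : ℂ) * h5)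
        (hmask 4 ha3) (by rw [norm_neg]; exact hmask 6 hb3) (hmask 7 hc3)
    · exact tri3_s11 (show x v0110 = x v0000 + -(x v0001) + -(x v1100) by linear_combination -h2)
        (hmask 0 ha4) (by rw [norm_neg]; exact hmask 1 hb4) (by rw [norm_neg]; exact hmask 8 hc4)
    · exact tri3_s11 (show x v0110 = x v0010 + -(x v0011) + x v1111 by linear_combination h3)
        (hmask 2 ha5) (by rw [norm_neg]; exact hmask 3 hb5) (hmask 9 hc5)
  · have hi' : (mask 6 || (mask 1 && mask 3 && mask 8) || (mask 7 && mask 8 && mask 9) || (mask 0 && mask 3 && mask 5) || (mask 4 && mask 5 && mask 7) || (mask 0 && mask 2 && mask 9) || (mask 1 && mask 2 && mask 4)) = true := hi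
    show ‖x v1000‖ < 3 * t
    simp only [Bool.or_eq_true, Bool.and_eq_true] at hi'
    rcases hi' with ((((((hh | ⟨⟨ha0, hb0⟩, hc0⟩) | ⟨⟨ha1, hb1⟩, hc1⟩) | ⟨⟨ha2, hb2⟩, hc2⟩) | ⟨⟨ha3, hb3⟩, hc3⟩) | ⟨⟨ha4, hb4⟩, hc4⟩) | ⟨⟨ha5, hb5⟩, hc5⟩)
    · exact (hmask 6 hh).trans_le (by linarith)
    · exact tri3_s11 (show x v1000 = x v0001 + -(x v0011) + x v1100 by linear_combination (1/2 : ℂ) * h1 + (1/2 : ℂ) * h2 + (1/2 : ℂ) * h3 + (1/2 : ℂ) * h4 - (1/2 : ℂ) * h5)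
        (hmask 1 ha0) (by rw [norm_neg]; exact hmask 3 hb0) (hmask 8 hc0)
    · exact tri3_s11 (show x v1000 = x v1001 + x v1100 + -(x v1111) by linear_combination h1)
        (hmask 7 ha1) (hmask 8 hb1) (by rw [norm_neg]; exact hmask 9 hc1)
    · exact tri3_s11 (show x v1000 = x v0000 + -(x v0011) + -(x v0110) by linear_combination (1/2 : ℂ) * h1 - (1/2 : ℂ) * h2 + (1/2 : ℂ) * h3 + (1/2 : ℂ) * h4 - (1/2 : ℂ) * h5)
        (hmask 0 ha2) (by rw [norm_neg]; exact hmask 3 hb2) (by rw [norm_neg]; exact hmask 5 hc2)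
    · exact tri3_s11 (show x v1000 = x v0100 + -(x v0110) + x v1001 by linear_combination (1/2 : ℂ) * h1 - (1/2 : ℂ) * h2 + (1/2 : ℂ) * h3 - (1/2 : ℂ) * h4 - (1/2 : ℂ) * h5)
        (hmask 4 ha3) (by rw [norm_neg]; exact hmask 5 hb3) (hmask 7 hc3)
    · exact tri3_s11 (show x v1000 = x v0000 + -(x v0010) + -(x v1111) by linear_combination (1/2 : ℂ) * h1 - (1/2 : ℂ) * h2 - (1/2 : ℂ) * h3 + (1/2 : ℂ) * h4 - (1/2 : ℂ) * h5)
        (hmask 0 ha4) (by rw [norm_neg]; exact hmask 2 hb4) (by rw [norm_neg]; exact hmask 9 hc4)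
    · exact tri3_s11 (show x v1000 = x v0001 + -(x v0010) + x v0100 by linear_combination -h5)
        (hmask 1 ha5) (by rw [norm_neg]; exact hmask 2 hb5) (hmask 4 hc5)
  · have hi' : (mask 7 || (mask 0 && mask 2 && mask 8) || (mask 6 && mask 8 && mask 9) || (mask 1 && mask 2 && mask 5) || (mask 4 && mask 5 && mask 6) || (mask 1 && mask 3 && mask 9) || (mask 0 && mask 3 && mask 4)) = true := hi
    show ‖x v1001‖ < 3 * t
    simp only [Bool.or_eq_true, Bool.and_eq_true] at hi'
    rcases hi' with ((((((hh | ⟨⟨ha0, hb0⟩, hc0⟩) | ⟨⟨ha1, hb1⟩, hc1⟩) | ⟨⟨ha2, hb2⟩, hc2⟩) | ⟨⟨ha3, hb3⟩, hc3⟩) | ⟨⟨ha4, hb4⟩, hc4⟩) | ⟨⟨ha5, hb5⟩, hc5⟩)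
    · exact (hmask 7 hh).trans_le (by linarith)
    · exact tri3_s11 (show x v1001 = x v0000 + -(x v0010) + -(x v1100) by linear_combination -(1/2 : ℂ) * h1 - (1/2 : ℂ) * h2 - (1/2 : ℂ) * h3 + (1/2 : ℂ) * h4 - (1/2 : ℂ) * h5)
        (hmask 0 ha0) (by rw [norm_neg]; exact hmask 2 hb0) (by rw [norm_neg]; exact hmask 8 hc0)
    · exact tri3_s11 (show x v1001 = x v1000 + -(x v1100) + x v1111 by linear_combination -h1)
        (hmask 6 ha1) (by rw [norm_neg]; exact hmask 8 hb1) (hmask 9 hc1)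
    · exact tri3_s11 (show x v1001 = x v0001 + -(x v0010) + x v0110 by linear_combination -(1/2 : ℂ) * h1 + (1/2 : ℂ) * h2 - (1/2 : ℂ) * h3 + (1/2 : ℂ) * h4 - (1/2 : ℂ) * h5)
        (hmask 1 ha2) (by rw [norm_neg]; exact hmask 2 hb2) (hmask 5 hc2)
    · exact tri3_s11 (show x v1001 = -(x v0100) + x v0110 + x v1000 by linear_combination -(1/2 : ℂ) * h1 + (1/2 : ℂ) * h2 - (1/2 : ℂ) * h3 + (1/2 : ℂ) * h4 + (1/2 : ℂ) * h5)
        (by rw [norm_neg]; exact hmask 4 ha3) (hmask 5 hb3) (hmask 6 hc3)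
    · exact tri3_s11 (show x v1001 = x v0001 + -(x v0011) + x v1111 by linear_combination -(1/2 : ℂ) * h1 + (1/2 : ℂ) * h2 + (1/2 : ℂ) * h3 + (1/2 : ℂ) * h4 - (1/2 : ℂ) * h5)
        (hmask 1 ha4) (by rw [norm_neg]; exact hmask 3 hb4) (hmask 9 hc4)
    · exact tri3_s11 (show x v1001 = x v0000 + -(x v0011) + -(x v0100) by linear_combination h4)
        (hmask 0 ha5) (by rw [norm_neg]; exact hmask 3 hb5) (by rw [norm_neg]; exact hmask 4 hc5)
  · have hi' : (mask 8 || (mask 2 && mask 3 && mask 4) || (mask 1 && mask 3 && mask 6) || (mask 0 && mask 2 && mask 7) || (mask 4 && mask 5 && mask 9) || (mask 6 && mask 7 && mask 9) || (mask 0 && mask 1 && mask 5)) = true := hi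
    show ‖x v1100‖ < 3 * t
    simp only [Bool.or_eq_true, Bool.and_eq_true] at hi'
    rcases hi' with ((((((hh | ⟨⟨ha0, hb0⟩, hc0⟩) | ⟨⟨ha1, hb1⟩, hc1⟩) | ⟨⟨ha2, hb2⟩, hc2⟩) | ⟨⟨ha3, hb3⟩, hc3⟩) | ⟨⟨ha4, hb4⟩, hc4⟩) | ⟨⟨ha5, hb5⟩, hc5⟩)
    · exact (hmask 8 hh).trans_le (by linarith)
    · exact tri3_s11 (show x v1100 = -(x v0010) + x v0011 + x v0100 by linear_combination -(1/2 : ℂ) * h1 - (1/2 : ℂ) * h2 - (1/2 : ℂ) * h3 - (1/2 : ℂ) * h4 - (1/2 : ℂ) * h5)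
        (by rw [norm_neg]; exact hmask 2 ha0) (hmask 3 hb0) (hmask 4 hc0)
    · exact tri3_s11 (show x v1100 = -(x v0001) + x v0011 + x v1000 by linear_combination -(1/2 : ℂ) * h1 - (1/2 : ℂ) * h2 - (1/2 : ℂ) * h3 - (1/2 : ℂ) * h4 + (1/2 : ℂ) * h5)
        (by rw [norm_neg]; exact hmask 1 ha1) (hmask 3 hb1) (hmask 6 hc1)
    · exact tri3_s11 (show x v1100 = x v0000 + -(x v0010) + -(x v1001) by linear_combination -(1/2 : ℂ) * h1 - (1/2 : ℂ) * h2 - (1/2 : ℂ) * h3 + (1/2 : ℂ) * h4 - (1/2 : ℂ) * h5)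
        (hmask 0 ha2) (by rw [norm_neg]; exact hmask 2 hb2) (by rw [norm_neg]; exact hmask 7 hc2)
    · exact tri3_s11 (show x v1100 = x v0100 + -(x v0110) + x v1111 by linear_combination -(1/2 : ℂ) * h1 - (1/2 : ℂ) * h2 + (1/2 : ℂ) * h3 - (1/2 : ℂ) * h4 - (1/2 : ℂ) * h5)
        (hmask 4 ha3) (by rw [norm_neg]; exact hmask 5 hb3) (hmask 9 hc3)
    · exact tri3_s11 (show x v1100 = x v1000 + -(x v1001) + x v1111 by linear_combination -h1)
        (hmask 6 ha4) (by rw [norm_neg]; exact hmask 7 hb4) (hmask 9 hc4)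
    · exact tri3_s11 (show x v1100 = x v0000 + -(x v0001) + -(x v0110) by linear_combination -h2)
        (hmask 0 ha5) (by rw [norm_neg]; exact hmask 1 hb5) (by rw [norm_neg]; exact hmask 5 hc5)
  · have hi' : (mask 9 || (mask 4 && mask 5 && mask 8) || (mask 6 && mask 7 && mask 8) || (mask 0 && mask 1 && mask 4) || (mask 0 && mask 2 && mask 6) || (mask 1 && mask 3 && mask 7) || (mask 2 && mask 3 && mask 5)) = true := hi
    show ‖x v1111‖ < 3 * t
    simp only [Bool.or_eq_true, Bool.and_eq_true] at hi'
    rcases hi' with ((((((hh | ⟨⟨ha0, hb0⟩, hc0⟩) | ⟨⟨ha1, hb1⟩, hc1⟩) | ⟨⟨ha2, hb2⟩, hc2⟩) | ⟨⟨ha3, hb3⟩, hc3⟩) | ⟨⟨ha4, hb4⟩, hc4⟩) | ⟨⟨ha5, hb5⟩, hc5⟩)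
    · exact (hmask 9 hh).trans_le (by linarith)
    · exact tri3_s11 (show x v1111 = -(x v0100) + x v0110 + x v1100 by linear_combination (1/2 : ℂ) * h1 + (1/2 : ℂ) * h2 - (1/2 : ℂ) * h3 + (1/2 : ℂ) * h4 + (1/2 : ℂ) * h5)
        (by rw [norm_neg]; exact hmask 4 ha0) (hmask 5 hb0) (hmask 8 hc0)
    · exact tri3_s11 (show x v1111 = -(x v1000) + x v1001 + x v1100 by linear_combination h1)
        (by rw [norm_neg]; exact hmask 6 ha1) (hmask 7 hb1) (hmask 8 hc1)
    · exact tri3_s11 (show x v1111 = x v0000 + -(x v0001) + -(x v0100) by linear_combination (1/2 : ℂ) * h1 - (1/2 : ℂ) * h2 - (1/2 : ℂ) * h3 + (1/2 : ℂ) * h4 + (1/2 : ℂ) * h5)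
        (hmask 0 ha2) (by rw [norm_neg]; exact hmask 1 hb2) (by rw [norm_neg]; exact hmask 4 hc2)
    · exact tri3_s11 (show x v1111 = x v0000 + -(x v0010) + -(x v1000) by linear_combination (1/2 : ℂ) * h1 - (1/2 : ℂ) * h2 - (1/2 : ℂ) * h3 + (1/2 : ℂ) * h4 - (1/2 : ℂ) * h5)
        (hmask 0 ha3) (by rw [norm_neg]; exact hmask 2 hb3) (by rw [norm_neg]; exact hmask 6 hc3)
    · exact tri3_s11 (show x v1111 = -(x v0001) + x v0011 + x v1001 by linear_combination (1/2 : ℂ) * h1 - (1/2 : ℂ) * h2 - (1/2 : ℂ) * h3 - (1/2 : ℂ) * h4 + (1/2 : ℂ) * h5)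
        (by rw [norm_neg]; exact hmask 1 ha4) (hmask 3 hb4) (hmask 7 hc4)
    · exact tri3_s11 (show x v1111 = -(x v0010) + x v0011 + x v0110 by linear_combination -h3)
        (by rw [norm_neg]; exact hmask 2 ha5) (hmask 3 hb5) (hmask 5 hc5)

set_option maxHeartbeats 4000000 in
/-- archimedean small-coordinate estimate for complex points of `A₂(2)ˢ`. -/
theorem small_coordinates_arch (x : V4 → ℂ)
    (hx : IsA22Point x) (hnz : ∃ m ∈ Echar, x m ≠ 0) :
    ({m | m ∈ Echar ∧ ‖x m‖ <
        Echar.sup' Echar_nonempty (fun m' => ‖x m'‖) / 27} : Set V4).ncard ≤ 4 ∨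
    ∃ Q : Finset V4, IsGopel Q ∧
      ({m | m ∈ Echar ∧ ‖x m‖ <
        Echar.sup' Echar_nonempty (fun m' => ‖x m'‖) / 27} : Set V4) ⊆
        ↑(Echar \ Q) := by
  classical
  set M := Echar.sup' Echar_nonempty (fun m' => ‖x m'‖) with hM
  have hM0 : 0 < M := by
    obtain ⟨m0, hm0, hne⟩ := hnz
    exact lt_of_lt_of_le (norm_pos_iff.mpr hne)
      (Finset.le_sup' (fun m' => ‖x m'‖) hm0)
  set S : Finset V4 := Echar.filter (fun m => ‖x m‖ < M / 27) with hS
  have hset : ({m | m ∈ Echar ∧ ‖x m‖ < M / 27} : Set V4) = ↑S := by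
    ext m; simp [hS]
  by_cases h4 : S.card ≤ 4
  · left
    rw [hset, Set.ncard_coe_finset]
    exact h4
  by_cases hQex : ∃ Q ∈ gopels, Q ∩ S = ∅
  · right
    obtain ⟨Q, hQg, hdis⟩ := hQex
    refine ⟨Q, gopel_sound Q hQg, ?_⟩
    rw [hset]
    intro m hm
    rw [Finset.coe_sdiff]
    have hmS : m ∈ S := hm
    refine ⟨(Finset.filter_subset _ _) hmS, fun hmQ => ?_⟩
    have hmem' : m ∈ Q ∩ S := Finset.mem_inter.mpr ⟨hmQ, hmS⟩
    rw [hdis] at hmem'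
    exact absurd hmem' (Finset.notMem_empty m)
  · exfalso
    push_neg at hQex
    have hhit : ∀ Q ∈ gopels, (Q ∩ S).Nonempty := fun Q hQg =>
      hQex Q hQg
    have hS5 : 5 ≤ S.card := by omega
    have hmem : ∀ m ∈ Echar, m = v0000 ∨ m = v0001 ∨ m = v0010 ∨ m = v0011 ∨ m = v0100 ∨ m = v0110 ∨ m = v1000 ∨ m = v1001 ∨ m = v1100 ∨ m = v1111 := by decide
    have hSU : S ⊆ ((if v0000 ∈ S then ({v0000} : Finset V4) else ∅) ∪ ((if v0001 ∈ S then ({v0001} : Finset V4) else ∅) ∪ ((if v0010 ∈ S then ({v0010} : Finset V4) else ∅) ∪ ((if v0011 ∈ S then ({v0011} : Finset V4) else ∅) ∪ ((if v0100 ∈ S then ({v0100} : Finset V4) else ∅) ∪ ((if v0110 ∈ S then ({v0110} : Finset V4) else ∅) ∪ ((if v1000 ∈ S then ({v1000} : Finset V4) else ∅) ∪ ((if v1001 ∈ S then ({v1001} : Finset V4) else ∅) ∪ ((if v1100 ∈ S then ({v1100} : Finset V4) else ∅) ∪ (if v1111 ∈ S then ({v1111} : Finset V4) else ∅))))))))))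 := by
      intro m hm
      have hmE := hmem m ((Finset.filter_subset _ _) (hS ▸ hm))
      rcases hmE with rfl|rfl|rfl|rfl|rfl|rfl|rfl|rfl|rfl|rfl
      · simp [Finset.mem_union, hm]
      · simp [Finset.mem_union, hm]
      · simp [Finset.mem_union, hm]
      · simp [Finset.mem_union, hm]
      · simp [Finset.mem_union, hm]
      · simp [Finset.mem_union, hm]
      · simp [Finset.mem_union, hm]
      · simp [Finset.mem_union, hm]
      · simp [Finset.mem_union, hm]
      · simp [Finset.mem_union, hm]
    have p0 : (if v0000 ∈ S then ({v0000} : Finset V4) else ∅).card = (decide (v0000 ∈ S)).toNat := by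
      by_cases h : v0000 ∈ S <;> simp [h]
    have p1 : (if v0001 ∈ S then ({v0001} : Finset V4) else ∅).card = (decide (v0001 ∈ S)).toNat := by
      by_cases h : v0001 ∈ S <;> simp [h]
    have p2 : (if v0010 ∈ S then ({v0010} : Finset V4) else ∅).card = (decide (v0010 ∈ S)).toNat := by
      by_cases h : v0010 ∈ S <;> simp [h]
    have p3 : (if v0011 ∈ S then ({v0011} : Finset V4) else ∅).card = (decide (v0011 ∈ S)).toNat := by
      by_cases h : v0011 ∈ S <;> simp [h]
    have p4 : (if v0100 ∈ S then ({v0100} : Finset V4) else ∅).card = (decide (v0100 ∈ S)).toNat := by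
      by_cases h : v0100 ∈ S <;> simp [h]
    have p5 : (if v0110 ∈ S then ({v0110} : Finset V4) else ∅).card = (decide (v0110 ∈ S)).toNat := by
      by_cases h : v0110 ∈ S <;> simp [h]
    have p6 : (if v1000 ∈ S then ({v1000} : Finset V4) else ∅).card = (decide (v1000 ∈ S)).toNat := by
      by_cases h : v1000 ∈ S <;> simp [h]
    have p7 : (if v1001 ∈ S then ({v1001} : Finset V4) else ∅).card = (decide (v1001 ∈ S)).toNat := by
      by_cases h : v1001 ∈ S <;> simp [h]
    have p8 : (if v1100 ∈ S then ({v1100} : Finset V4) else ∅).card = (decide (v1100 ∈ S)).toNat := by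
      by_cases h : v1100 ∈ S <;> simp [h]
    have p9 : (if v1111 ∈ S then ({v1111} : Finset V4) else ∅).card = (decide (v1111 ∈ S)).toNat := by
      by_cases h : v1111 ∈ S <;> simp [h]
    have hUcard : (((if v0000 ∈ S then ({v0000} : Finset V4) else ∅) ∪ ((if v0001 ∈ S then ({v0001} : Finset V4) else ∅) ∪ ((if v0010 ∈ S then ({v0010} : Finset V4) else ∅) ∪ ((if v0011 ∈ S then ({v0011} : Finset V4) else ∅) ∪ ((if v0100 ∈ S then ({v0100} : Finset V4) else ∅) ∪ ((if v0110 ∈ S then ({v0110} : Finset V4) else ∅) ∪ ((if v1000 ∈ S then ({v1000} : Finset V4) else ∅) ∪ ((if v1001 ∈ S then ({v1001} : Finset V4) else ∅) ∪ ((if v1100 ∈ S then ({v1100} : Finset V4) else ∅) ∪ (if v1111 ∈ S then ({v1111} : Finset V4) else ∅))))))))))).card ≤ (decide (v0000 ∈ S)).toNat + ((decide (v0001 ∈ S)).toNat + ((decide (v0010 ∈ S)).toNat + ((decide (v0011 ∈ S)).toNat + ((decide (v0100 ∈ S)).toNat + ((decide (v0110 ∈ S)).toNat + ((decide (v1000 ∈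 S)).toNat + ((decide (v1001 ∈ S)).toNat + ((decide (v1100 ∈ S)).toNat + (decide (v1111 ∈ S)).toNat)))))))) := by
      refine le_trans ?_ (le_refl _)
      exact le_trans (Finset.card_union_le _ _) (by rw [p0]; exact Nat.add_le_add_left (le_trans (Finset.card_union_le _ _) (by rw [p1]; exact Nat.add_le_add_left (le_trans (Finset.card_union_le _ _) (by rw [p2]; exact Nat.add_le_add_left (le_trans (Finset.card_union_le _ _) (by rw [p3]; exact Nat.add_le_add_left (le_trans (Finset.card_union_le _ _) (by rw [p4]; exact Nat.add_le_add_left (le_trans (Finset.card_union_le _ _) (by rw [p5]; exact Nat.add_le_add_left (le_trans (Finset.card_union_le _ _) (by rw [p6]; exact Nat.add_le_add_left (le_trans (Finset.card_union_le _ _) (by rw [p7]; exact Nat.add_le_add_left (le_trans (Finset.card_union_le _ _) (by rw [p8]; exact Nat.add_le_add_left (le_of_eq p9) _)) _)) _)) _)) _)) _)) _)) _)) _)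
    have hS5' : 5 ≤ (decide (v0000 ∈ S)).toNat + ((decide (v0001 ∈ S)).toNat + ((decide (v0010 ∈ S)).toNat + ((decide (v0011 ∈ S)).toNat + ((decide (v0100 ∈ S)).toNat + ((decide (v0110 ∈ S)).toNat + ((decide (v1000 ∈ S)).toNat + ((decide (v1001 ∈ S)).toNat + ((decide (v1100 ∈ S)).toNat + (decide (v1111 ∈ S)).toNat)))))))) :=
      le_trans hS5 (le_trans (Finset.card_le_card hSU) hUcard)
    have g1 : (decide (v0000 ∈ S) || decide (v0001 ∈ S) || decide (v0010 ∈ S) || decide (v0011 ∈ S)) = true := by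
      obtain ⟨m, hm⟩ := hhit ({v0000, v0001, v0010, v0011} : Finset V4) (by simp [gopels])
      rw [Finset.mem_inter] at hm
      obtain ⟨hmQ, hmS⟩ := hm
      simp only [Finset.mem_insert, Finset.mem_singleton] at hmQ
      rcases hmQ with rfl|rfl|rfl|rfl <;> simp [hmS]
    have g2 : (decide (v0000 ∈ S) || decide (v0001 ∈ S) || decide (v1000 ∈ S) || decide (v1001 ∈ S)) = true := by
      obtain ⟨m, hm⟩ := hhit ({v0000, v0001, v1000, v1001} : Finset V4) (by simp [gopels])
      rw [Finset.mem_inter] at hm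
      obtain ⟨hmQ, hmS⟩ := hm
      simp only [Finset.mem_insert, Finset.mem_singleton] at hmQ
      rcases hmQ with rfl|rfl|rfl|rfl <;> simp [hmS]
    have g3 : (decide (v0000 ∈ S) || decide (v0010 ∈ S) || decide (v0100 ∈ S) || decide (v0110 ∈ S)) = true := by
      obtain ⟨m, hm⟩ := hhit ({v0000, v0010, v0100, v0110} : Finset V4) (by simp [gopels])
      rw [Finset.mem_inter] at hm
      obtain ⟨hmQ, hmS⟩ := hm
      simp only [Finset.mem_insert, Finset.mem_singleton] at hmQ
      rcases hmQ with rfl|rfl|rfl|rfl <;> simp [hmS]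
    have g4 : (decide (v0000 ∈ S) || decide (v0011 ∈ S) || decide (v1100 ∈ S) || decide (v1111 ∈ S)) = true := by
      obtain ⟨m, hm⟩ := hhit ({v0000, v0011, v1100, v1111} : Finset V4) (by simp [gopels])
      rw [Finset.mem_inter] at hm
      obtain ⟨hmQ, hmS⟩ := hm
      simp only [Finset.mem_insert, Finset.mem_singleton] at hmQ
      rcases hmQ with rfl|rfl|rfl|rfl <;> simp [hmS]
    have g5 : (decide (v0000 ∈ S) || decide (v0100 ∈ S) || decide (v1000 ∈ S) || decide (v1100 ∈ S)) = true := by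
      obtain ⟨m, hm⟩ := hhit ({v0000, v0100, v1000, v1100} : Finset V4) (by simp [gopels])
      rw [Finset.mem_inter] at hm
      obtain ⟨hmQ, hmS⟩ := hm
      simp only [Finset.mem_insert, Finset.mem_singleton] at hmQ
      rcases hmQ with rfl|rfl|rfl|rfl <;> simp [hmS]
    have g6 : (decide (v0000 ∈ S) || decide (v0110 ∈ S) || decide (v1001 ∈ S) || decide (v1111 ∈ S)) = true := by
      obtain ⟨m, hm⟩ := hhit ({v0000, v0110, v1001, v1111} : Finset V4) (by simp [gopels])
      rw [Finset.mem_inter] at hm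
      obtain ⟨hmQ, hmS⟩ := hm
      simp only [Finset.mem_insert, Finset.mem_singleton] at hmQ
      rcases hmQ with rfl|rfl|rfl|rfl <;> simp [hmS]
    have g7 : (decide (v0001 ∈ S) || decide (v0010 ∈ S) || decide (v1100 ∈ S) || decide (v1111 ∈ S)) = true := by
      obtain ⟨m, hm⟩ := hhit ({v0001, v0010, v1100, v1111} : Finset V4) (by simp [gopels])
      rw [Finset.mem_inter] at hm
      obtain ⟨hmQ, hmS⟩ := hm
      simp only [Finset.mem_insert, Finset.mem_singleton] at hmQ
      rcases hmQ with rfl|rfl|rfl|rfl <;> simp [hmS]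
    have g8 : (decide (v0001 ∈ S) || decide (v0011 ∈ S) || decide (v0100 ∈ S) || decide (v0110 ∈ S)) = true := by
      obtain ⟨m, hm⟩ := hhit ({v0001, v0011, v0100, v0110} : Finset V4) (by simp [gopels])
      rw [Finset.mem_inter] at hm
      obtain ⟨hmQ, hmS⟩ := hm
      simp only [Finset.mem_insert, Finset.mem_singleton] at hmQ
      rcases hmQ with rfl|rfl|rfl|rfl <;> simp [hmS]
    have g9 : (decide (v0001 ∈ S) || decide (v0100 ∈ S) || decide (v1001 ∈ S) || decide (v1100 ∈ S)) = true := by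
      obtain ⟨m, hm⟩ := hhit ({v0001, v0100, v1001, v1100} : Finset V4) (by simp [gopels])
      rw [Finset.mem_inter] at hm
      obtain ⟨hmQ, hmS⟩ := hm
      simp only [Finset.mem_insert, Finset.mem_singleton] at hmQ
      rcases hmQ with rfl|rfl|rfl|rfl <;> simp [hmS]
    have g10 : (decide (v0001 ∈ S) || decide (v0110 ∈ S) || decide (v1000 ∈ S) || decide (v1111 ∈ S)) = true := by
      obtain ⟨m, hm⟩ := hhit ({v0001, v0110, v1000, v1111} : Finset V4) (by simp [gopels])
      rw [Finset.mem_inter] at hm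
      obtain ⟨hmQ, hmS⟩ := hm
      simp only [Finset.mem_insert, Finset.mem_singleton] at hmQ
      rcases hmQ with rfl|rfl|rfl|rfl <;> simp [hmS]
    have g11 : (decide (v0010 ∈ S) || decide (v0011 ∈ S) || decide (v1000 ∈ S) || decide (v1001 ∈ S)) = true := by
      obtain ⟨m, hm⟩ := hhit ({v0010, v0011, v1000, v1001} : Finset V4) (by simp [gopels])
      rw [Finset.mem_inter] at hm
      obtain ⟨hmQ, hmS⟩ := hm
      simp only [Finset.mem_insert, Finset.mem_singleton] at hmQ
      rcases hmQ with rfl|rfl|rfl|rfl <;> simp [hmS]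
    have g12 : (decide (v0010 ∈ S) || decide (v0100 ∈ S) || decide (v1001 ∈ S) || decide (v1111 ∈ S)) = true := by
      obtain ⟨m, hm⟩ := hhit ({v0010, v0100, v1001, v1111} : Finset V4) (by simp [gopels])
      rw [Finset.mem_inter] at hm
      obtain ⟨hmQ, hmS⟩ := hm
      simp only [Finset.mem_insert, Finset.mem_singleton] at hmQ
      rcases hmQ with rfl|rfl|rfl|rfl <;> simp [hmS]
    have g13 : (decide (v0010 ∈ S) || decide (v0110 ∈ S) || decide (v1000 ∈ S) || decide (v1100 ∈ S)) = true := by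
      obtain ⟨m, hm⟩ := hhit ({v0010, v0110, v1000, v1100} : Finset V4) (by simp [gopels])
      rw [Finset.mem_inter] at hm
      obtain ⟨hmQ, hmS⟩ := hm
      simp only [Finset.mem_insert, Finset.mem_singleton] at hmQ
      rcases hmQ with rfl|rfl|rfl|rfl <;> simp [hmS]
    have g14 : (decide (v0011 ∈ S) || decide (v0100 ∈ S) || decide (v1000 ∈ S) || decide (v1111 ∈ S)) = true := by
      obtain ⟨m, hm⟩ := hhit ({v0011, v0100, v1000, v1111} : Finset V4) (by simp [gopels])
      rw [Finset.mem_inter] at hm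
      obtain ⟨hmQ, hmS⟩ := hm
      simp only [Finset.mem_insert, Finset.mem_singleton] at hmQ
      rcases hmQ with rfl|rfl|rfl|rfl <;> simp [hmS]
    have g15 : (decide (v0011 ∈ S) || decide (v0110 ∈ S) || decide (v1001 ∈ S) || decide (v1100 ∈ S)) = true := by
      obtain ⟨m, hm⟩ := hhit ({v0011, v0110, v1001, v1100} : Finset V4) (by simp [gopels])
      rw [Finset.mem_inter] at hm
      obtain ⟨hmQ, hmS⟩ := hm
      simp only [Finset.mem_insert, Finset.mem_singleton] at hmQ
      rcases hmQ with rfl|rfl|rfl|rfl <;> simp [hmS]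
    have hcomb := combB (decide (v0000 ∈ S)) (decide (v0001 ∈ S)) (decide (v0010 ∈ S)) (decide (v0011 ∈ S)) (decide (v0100 ∈ S)) (decide (v0110 ∈ S)) (decide (v1000 ∈ S)) (decide (v1001 ∈ S)) (decide (v1100 ∈ S)) (decide (v1111 ∈ S))
      hS5' g1 g2 g3 g4 g5 g6 g7 g8 g9 g10 g11 g12 g13 g14 g15
    have b0 : ∀ i, (![decide (v0000 ∈ S), decide (v0001 ∈ S), decide (v0010 ∈ S), decide (v0011 ∈ S), decide (v0100 ∈ S), decide (v0110 ∈ S), decide (v1000 ∈ S), decide (v1001 ∈ S), decide (v1100 ∈ S), decide (v1111 ∈ S)] : Fin 10 → Bool) i = true → ‖x (eV i)‖ < M / 27 := by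
      intro i hi
      obtain ⟨iv, hlt⟩ := i
      interval_cases iv
      · have h : decide (v0000 ∈ S) = true := hi
        have hm := of_decide_eq_true h
        rw [hS] at hm
        exact (Finset.mem_filter.mp hm).2
      · have h : decide (v0001 ∈ S) = true := hi
        have hm := of_decide_eq_true h
        rw [hS] at hm
        exact (Finset.mem_filter.mp hm).2
      · have h : decide (v0010 ∈ S) = true := hi
        have hm := of_decide_eq_true h
        rw [hS] at hm
        exact (Finset.mem_filter.mp hm).2
      · have h : decide (v0011 ∈ S) = true := hi
        have hm := of_decide_eq_true h
        rw [hS] at hm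
        exact (Finset.mem_filter.mp hm).2
      · have h : decide (v0100 ∈ S) = true := hi
        have hm := of_decide_eq_true h
        rw [hS] at hm
        exact (Finset.mem_filter.mp hm).2
      · have h : decide (v0110 ∈ S) = true := hi
        have hm := of_decide_eq_true h
        rw [hS] at hm
        exact (Finset.mem_filter.mp hm).2
      · have h : decide (v1000 ∈ S) = true := hi
        have hm := of_decide_eq_true h
        rw [hS] at hm
        exact (Finset.mem_filter.mp hm).2
      · have h : decide (v1001 ∈ S) = true := hi
        have hm := of_decide_eq_true h
        rw [hS] at hm
        exact (Finset.mem_filter.mp hm).2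
      · have h : decide (v1100 ∈ S) = true := hi
        have hm := of_decide_eq_true h
        rw [hS] at hm
        exact (Finset.mem_filter.mp hm).2
      · have h : decide (v1111 ∈ S) = true := hi
        have hm := of_decide_eq_true h
        rw [hS] at hm
        exact (Finset.mem_filter.mp hm).2
    have ht0 : (0:ℝ) < M / 27 := by positivity
    have c1 := stepB_bound x hx ht0 _ b0
    have c2 := stepB_bound x hx (by positivity) _ c1
    have c3 := stepB_bound x hx (by positivity) _ c2
    have hfin : ∀ i, ‖x (eV i)‖ < M := by
      intro i
      have hh := c3 i (hcomb i)
      have h27 : (3:ℝ) * (3 * (3 * (M / 27))) = M := by ring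
      rw [h27] at hh
      exact hh
    obtain ⟨m1, hm1, hm1eq⟩ :=
      Finset.exists_mem_eq_sup' Echar_nonempty (fun m' => ‖x m'‖)
    rw [← hM] at hm1eq
    rcases hmem m1 hm1 with rfl|rfl|rfl|rfl|rfl|rfl|rfl|rfl|rfl|rfl
    · have hh : ‖x v0000‖ < M := hfin 0
      rw [← hm1eq] at hh
      exact lt_irrefl M hh
    · have hh : ‖x v0001‖ < M := hfin 1
      rw [← hm1eq] at hh
      exact lt_irrefl M hh
    · have hh : ‖x v0010‖ < M := hfin 2
      rw [← hm1eq] at hh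
      exact lt_irrefl M hh
    · have hh : ‖x v0011‖ < M := hfin 3
      rw [← hm1eq] at hh
      exact lt_irrefl M hh
    · have hh : ‖x v0100‖ < M := hfin 4
      rw [← hm1eq] at hh
      exact lt_irrefl M hh
    · have hh : ‖x v0110‖ < M := hfin 5
      rw [← hm1eq] at hh
      exact lt_irrefl M hh
    · have hh : ‖x v1000‖ < M := hfin 6
      rw [← hm1eq] at hh
      exact lt_irrefl M hh
    · have hh : ‖x v1001‖ < M := hfin 7
      rw [← hm1eq] at hh
      exact lt_irrefl M hh
    · have hh : ‖x v1100‖ < M := hfin 8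
      rw [← hm1eq] at hh
      exact lt_irrefl M hh
    · have hh : ‖x v1111‖ < M := hfin 9
      rw [← hm1eq] at hh
      exact lt_irrefl M hh
end
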